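/- arXiv:2403.09938 — 3 statements merged into one kernel-verified Lean document; each statement's English description precedes it below -/
import Mathlib

section
/- Fix I = {0 = i_0 < i_1 < … < i_r = m}. The map filter_I : W^I_m → W_{[1,i_1]} □ W_{[i_1+1,i_2]} □ ⋯ □ W_{[i_{r−1}+1,m]}, defined on vertices by w ↦ filter_I(w) = (w^{(1)},…,w^{(r)}), is a local isomorphism of pre-crystal graphs. -/
namespace FilteredRSK

/-! ## Words and crystal operators (via parenthesis matching) -/

/-- Scan the word `w`, treating each letter `i` as a `)` and each letter `i+1` as a `(`,
matching parentheses in the usual way.  Returns the pair consisting of the list of positions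
of unmatched `)` (rightmost first) and the stack of positions of unmatched `(`
(most recent first, so the leftmost unmatched `(` is the last entry). -/
def bracketScan (i : ℕ) (w : List ℕ) : List ℕ × List ℕ :=
  (w.zipIdx.map Prod.swap).foldl
    (fun (st : List ℕ × List ℕ) (p : ℕ × ℕ) =>
      if p.2 = i + 1 then (st.1, p.1 :: st.2)
      else if p.2 = i then
        match st.2 with
        | [] => (p.1 :: st.1, [])
        | _ :: rest => (st.1, rest)
      else st)
    ([], [])

/-- Position of the rightmost unmatched `)` of `bracket_i(w)`, if any. -/
def fPos (i : ℕ) (w : List ℕ) : Option ℕ := (bracketScan i w).1.head?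

/-- Position of the leftmost unmatched `(` of `bracket_i(w)`, if any. -/
def ePos (i : ℕ) (w : List ℕ) : Option ℕ := (bracketScan i w).2.getLast?

/-- The crystal lowering operator `f_i`: change the letter `i` at the rightmost unmatched `)`
to `i+1`; output `∅` (i.e. `none`) if there is no unmatched `)`. -/
def fWord (i : ℕ) (w : List ℕ) : Option (List ℕ) := (fPos i w).map fun p => w.set p (i + 1)

/-- The crystal raising operator `e_i`: change the letter `i+1` at the leftmost unmatched `(`
to `i`; output `∅` (i.e. `none`) if there is no unmatched `(`. -/
def eWord (i : ℕ) (w : List ℕ) : Option (List ℕ) := (ePos i w).map fun p => w.set p i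

/-! ## Tableaux -/

/-- A tableau is a list of rows (top to bottom).  Its column reading word reads each column
bottom-to-top, columns left to right. -/
def readingWord (T : List (List ℕ)) : List ℕ :=
  (List.range (T.headD []).length).flatMap fun j => (T.filterMap fun row => row[j]?).reverse

/-- Semistandardness: all rows nonempty, rows weakly increase, row lengths weakly decrease,
and columns strictly increase. -/
def IsSSYT (T : List (List ℕ)) : Prop :=
  (∀ row ∈ T, row ≠ []) ∧
  (∀ row ∈ T, row.Chain' (· ≤ ·)) ∧
  T.Chain' (fun row row' => row'.length ≤ row.length ∧
    ∀ j < row'.length, row.getD j 0 < row'.getD j 0)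

/-- All entries of the tableau `T` lie in the interval `[a, b]`. -/
def entriesIn (T : List (List ℕ)) (a b : ℕ) : Prop := ∀ row ∈ T, ∀ x ∈ row, a ≤ x ∧ x ≤ b

/-- The shape of a tableau: the list of its row lengths. -/
def shape (T : List (List ℕ)) : List ℕ := T.map List.length

/-- A partition: a weakly decreasing list of positive integers. -/
def IsPartition (lam : List ℕ) : Prop :=
  lam.Chain' (fun x y => y ≤ x) ∧ ∀ x ∈ lam, 0 < x

/-- Row insertion of `x` into a single row: replace the first entry strictly larger than `x`
(and bump it out), or append `x` at the end. -/
def insertRow (row : List ℕ) (x : ℕ) : List ℕ × Option ℕ :=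
  match row.findIdx? (fun y => decide (x < y)) with
  | none => (row ++ [x], none)
  | some k => (row.set k x, row[k]?)

/-- Row insertion of a letter into a tableau. -/
def insertTab : List (List ℕ) → ℕ → List (List ℕ)
  | [], x => [[x]]
  | row :: rest, x =>
    match insertRow row x with
    | (row', none) => row' :: rest
    | (row', some y) => row' :: insertTab rest y

/-- The insertion tableau of a word, obtained by successive row insertion of its letters. -/
def tabOf (w : List ℕ) : List (List ℕ) := w.foldl insertTab []

/-- The highest-weight tableau of shape `lam` with entries from `[a, b]`:
row `i` (0-indexed) is constantly filled with `a + i`. -/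
def highestTab (lam : List ℕ) (a : ℕ) : List (List ℕ) :=
  lam.mapIdx fun i len => List.replicate len (a + i)

/-! ## Knuth equivalence -/

/-- Elementary Knuth moves. -/
inductive KnuthStep : List ℕ → List ℕ → Prop
  | yzx (u v : List ℕ) (x y z : ℕ) (h1 : x < y) (h2 : y ≤ z) :
      KnuthStep (u ++ y :: z :: x :: v) (u ++ y :: x :: z :: v)
  | zxy (u v : List ℕ) (x y z : ℕ) (h1 : x ≤ y) (h2 : y < z) :
      KnuthStep (u ++ z :: x :: y :: v) (u ++ x :: z :: y :: v)

/-- Knuth equivalence: the equivalence relation generated by elementary Knuth moves. -/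
def KnuthEquiv : List ℕ → List ℕ → Prop := Relation.EqvGen KnuthStep

/-- The Knuth equivalence class of a word. -/
def KClass (w : List ℕ) : Set (List ℕ) := {v | KnuthEquiv w v}

open Classical in
/-- A representative of a (nonempty) set of words. -/
noncomputable def classRep (C : Set (List ℕ)) : List ℕ :=
  if h : C.Nonempty then h.some else []

/-- The weight of a Knuth class, defined via a representative. -/
noncomputable def classWt (C : Set (List ℕ)) : Multiset ℕ := ↑(classRep C)

/-- The insertion tableau of a Knuth class (as the reading word of the tableau),
defined via a representative. -/
noncomputable def classTab (C : Set (List ℕ)) : List ℕ := readingWord (tabOf (classRep C))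

/-! ## Pre-crystal graphs -/

/-- A pre-crystal graph: a directed graph with edge labels in `L` and
vertex weights in `W`, together with a distinguished set of vertices. -/
structure PCG (V : Type*) (L : Type*) (W : Type*) where
  verts : Set V
  wt : V → W
  E : L → V → V → Prop

namespace PCG

variable {V V' L L' W W' : Type*}

/-- Underlying undirected adjacency between vertices. -/
def Adj (G : PCG V L W) (u v : V) : Prop :=
  u ∈ G.verts ∧ v ∈ G.verts ∧ ∃ l, G.E l u v ∨ G.E l v u

/-- `u` and `v` lie in the same connected component. -/
def Reach (G : PCG V L W) : V → V → Prop := Relation.ReflTransGen G.Adj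

/-- The connected component of `v` in `G`, as a pre-crystal graph. -/
def comp (G : PCG V L W) (v : V) : PCG V L W where
  verts := {u | u ∈ G.verts ∧ G.Reach v u}
  wt := G.wt
  E := G.E

/-- A pre-crystal graph homomorphism (with weights translated along `ω`):
a vertex map preserving weights and labelled edges. -/
def IsHomVia (G : PCG V L W) (H : PCG V' L W') (ω : W → W') (f : V → V') : Prop :=
  (∀ v ∈ G.verts, f v ∈ H.verts) ∧
  (∀ v ∈ G.verts, H.wt (f v) = ω (G.wt v)) ∧
  (∀ (l : L), ∀ u ∈ G.verts, ∀ v ∈ G.verts, G.E l u v → H.E l (f u) (f v))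

/-- A local isomorphism of pre-crystal graphs: a homomorphism whose restriction to each
connected component of `G` is an isomorphism onto a connected component of `H`. -/
def IsLocalIsoVia (G : PCG V L W) (H : PCG V' L W') (ω : W → W') (f : V → V') : Prop :=
  IsHomVia G H ω f ∧
  (∀ u ∈ G.verts, ∀ v ∈ G.verts, G.Reach u v → f u = f v → u = v) ∧
  (∀ u ∈ G.verts, ∀ v' ∈ H.verts, H.Reach (f u) v' → ∃ v ∈ G.verts, G.Reach u v ∧ f v = v') ∧
  (∀ (l : L), ∀ u ∈ G.verts, ∀ v ∈ G.verts, G.Reach u v → H.E l (f u) (f v) → G.E l u v)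

/-- An isomorphism of pre-crystal graphs. -/
def IsIsoVia (G : PCG V L W) (H : PCG V' L W') (ω : W → W') (f : V → V') : Prop :=
  IsHomVia G H ω f ∧ Set.BijOn f G.verts H.verts ∧
  (∀ (l : L), ∀ u ∈ G.verts, ∀ v ∈ G.verts, H.E l (f u) (f v) → G.E l u v)

/-- Two pre-crystal graphs are isomorphic (with weights identified along `ω`). -/
def IsomorphicVia (G : PCG V L W) (H : PCG V' L W') (ω : W → W') : Prop :=
  ∃ f, IsIsoVia G H ω f

/-- The Cartesian product of two pre-crystal graphs; edge labels form the disjoint union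
of the two label sets, and weights are concatenated. -/
def prod (G : PCG V L W) (H : PCG V' L' W') : PCG (V × V') (L ⊕ L') (W × W') where
  verts := {p | p.1 ∈ G.verts ∧ p.2 ∈ H.verts}
  wt := fun p => (G.wt p.1, H.wt p.2)
  E := fun l p q =>
    match l with
    | Sum.inl a => G.E a p.1 q.1 ∧ p.2 = q.2
    | Sum.inr b => H.E b p.2 q.2 ∧ p.1 = q.1

/-- The Cartesian product of a finite family of pre-crystal graphs sharing a common ambient
label set (with disjoint effective labels, as for crystals of words on disjoint intervals):
an edge labelled `l` acts in a single coordinate and fixes all others. -/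
def pi {r : ℕ} (G : Fin r → PCG V L W) : PCG (Fin r → V) L (Fin r → W) where
  verts := {p | ∀ k, p k ∈ (G k).verts}
  wt := fun p k => (G k).wt (p k)
  E := fun l p q => ∃ k, (G k).E l (p k) (q k) ∧ ∀ k', k' ≠ k → p k' = q k'

end PCG

/-! ## Word, tableau and Knuth crystal graphs -/

/-- The word crystal graph `W_{[a,b]}`: vertices are the words on the alphabet `[a,b]`,
the weight of a word is its multiset of letters (recording the number of occurrences of
each letter), and there is an edge `w →ᵢ v` iff `v = f_i(w)` (for `a ≤ i < b`). -/
def WordGraph (a b : ℕ) : PCG (List ℕ) ℕ (Multiset ℕ) where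
  verts := {w | ∀ x ∈ w, a ≤ x ∧ x ≤ b}
  wt := fun w => ↑w
  E := fun i u v => a ≤ i ∧ i < b ∧ fWord i u = some v

/-- The disjoint union `⊕_λ B_{λ,[a,b]}` of all tableau crystal graphs with entries in
`[a,b]`: the induced subgraph of `W_{[a,b]}` on reading words of semistandard tableaux. -/
def TabWordGraph (a b : ℕ) : PCG (List ℕ) ℕ (Multiset ℕ) where
  verts := {w | ∃ T, IsSSYT T ∧ entriesIn T a b ∧ readingWord T = w}
  wt := fun w => ↑w
  E := fun i u v => a ≤ i ∧ i < b ∧ fWord i u = some v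

/-- The tableau crystal graph `B_{λ,[a,b]}`: the induced subgraph of `W_{[a,b]}` on the
reading words of semistandard tableaux of shape `λ` with entries in `[a,b]`. -/
def BGraph (lam : List ℕ) (a b : ℕ) : PCG (List ℕ) ℕ (Multiset ℕ) where
  verts := {w | ∃ T, IsSSYT T ∧ shape T = lam ∧ entriesIn T a b ∧ readingWord T = w}
  wt := fun w => ↑w
  E := fun i u v => a ≤ i ∧ i < b ∧ fWord i u = some v

/-- The Knuth crystal graph `K_{[a,b]}`: vertices are Knuth equivalence classes of words on
`[a,b]`, weights via representatives, with an edge `C →ᵢ C'` iff some representatives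
`w ∈ C`, `w' ∈ C'` satisfy `w' = f_i(w)`. -/
noncomputable def KnuthGraph (a b : ℕ) : PCG (Set (List ℕ)) ℕ (Multiset ℕ) where
  verts := {C | ∃ w, (∀ x ∈ w, a ≤ x ∧ x ≤ b) ∧ C = KClass w}
  wt := classWt
  E := fun i C C' => ∃ w ∈ C, ∃ w' ∈ C', a ≤ i ∧ i < b ∧ fWord i w = some w'

/-! ## Filtrations -/

/-- `ι` enumerates a filtration `0 = i₀ < i₁ < ⋯ < i_r = m` of `[0, m]`. -/
def IsFiltration (m : ℕ) {r : ℕ} (ι : Fin (r + 1) → ℕ) : Prop :=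
  StrictMono ι ∧ ι 0 = 0 ∧ ι (Fin.last r) = m

/-- The subword of `w` consisting of all letters in the interval `[lo + 1, hi]`. -/
def blockFilter (lo hi : ℕ) (w : List ℕ) : List ℕ :=
  w.filter fun x => decide (lo + 1 ≤ x ∧ x ≤ hi)

/-- The `I`-filtration of a word: the tuple of subwords on the letter intervals
`[i_{k-1}+1, i_k]`. -/
def filterWord {r : ℕ} (ι : Fin (r + 1) → ℕ) (w : List ℕ) : Fin r → List ℕ :=
  fun k => blockFilter (ι k.castSucc) (ι k.succ) w

/-- The canonical splitting of a weight (a multiset of letters) along the intervals of a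
filtration. -/
def splitWt {r : ℕ} (ι : Fin (r + 1) → ℕ) (s : Multiset ℕ) : Fin r → Multiset ℕ :=
  fun k => s.filter fun x => ι k.castSucc + 1 ≤ x ∧ x ≤ ι k.succ

/-- The `I`-filtered word crystal graph `W^I_m`: the subgraph of `W_m = W_{[1,m]}` obtained
by deleting all edges labelled by elements of `I`. -/
def FilteredWordGraph (m : ℕ) (I : Set ℕ) : PCG (List ℕ) ℕ (Multiset ℕ) where
  verts := {w | ∀ x ∈ w, 1 ≤ x ∧ x ≤ m}
  wt := fun w => ↑w
  E := fun i u v => i ∉ I ∧ 1 ≤ i ∧ i < m ∧ fWord i u = some v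

/-- The `I`-filtered Knuth crystal graph `K^I_m`: the quotient of `W^I_m` by Knuth
equivalence. -/
noncomputable def FilteredKnuthGraph (m : ℕ) (I : Set ℕ) :
    PCG (Set (List ℕ)) ℕ (Multiset ℕ) where
  verts := {C | ∃ w, (∀ x ∈ w, 1 ≤ x ∧ x ≤ m) ∧ C = KClass w}
  wt := classWt
  E := fun i C C' => i ∉ I ∧ ∃ w ∈ C, ∃ w' ∈ C', 1 ≤ i ∧ i < m ∧ fWord i w = some w'

/-- The product `W_{[1,i₁]} □ W_{[i₁+1,i₂]} □ ⋯ □ W_{[i_{r-1}+1,m]}`. -/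
def WordPiGraph {r : ℕ} (ι : Fin (r + 1) → ℕ) :
    PCG (Fin r → List ℕ) ℕ (Fin r → Multiset ℕ) :=
  PCG.pi fun k => WordGraph (ι k.castSucc + 1) (ι k.succ)

/-- The product `K_{[1,i₁]} □ K_{[i₁+1,i₂]} □ ⋯ □ K_{[i_{r-1}+1,m]}`. -/
noncomputable def KnuthPiGraph {r : ℕ} (ι : Fin (r + 1) → ℕ) :
    PCG (Fin r → Set (List ℕ)) ℕ (Fin r → Multiset ℕ) :=
  PCG.pi fun k => KnuthGraph (ι k.castSucc + 1) (ι k.succ)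

/-- The disjoint union, over all `I`-filtered partition-tuples `λ`, of the filtered tableau
crystal graphs `B_{λ,m} = B_{λ⁽¹⁾,[1,i₁]} □ ⋯ □ B_{λ⁽ʳ⁾,[i_{r-1}+1,m]}`. -/
def TabPiGraph {r : ℕ} (ι : Fin (r + 1) → ℕ) :
    PCG (Fin r → List ℕ) ℕ (Fin r → Multiset ℕ) :=
  PCG.pi fun k => TabWordGraph (ι k.castSucc + 1) (ι k.succ)

/-- The `I`-filtered tableau crystal graph `B_{λ,m}` of shape-tuple `λ`. -/
def BPiGraph {r : ℕ} (ι : Fin (r + 1) → ℕ) (lam : Fin r → List ℕ) :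
    PCG (Fin r → List ℕ) ℕ (Fin r → Multiset ℕ) :=
  PCG.pi fun k => BGraph (lam k) (ι k.castSucc + 1) (ι k.succ)

/-- The map on Knuth classes induced by the `I`-filtration (via a representative). -/
noncomputable def classFilter {r : ℕ} (ι : Fin (r + 1) → ℕ) (C : Set (List ℕ)) :
    Fin r → Set (List ℕ) :=
  fun k => KClass (filterWord ι (classRep C) k)

/-- An `I`-filtered partition-tuple: each `λ⁽ᵏ⁾` is a partition with at most
`i_k - i_{k-1}` rows. -/
def IsFilteredShape {r : ℕ} (ι : Fin (r + 1) → ℕ) (lam : Fin r → List ℕ) : Prop :=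
  ∀ k, IsPartition (lam k) ∧ (lam k).length ≤ ι k.succ - ι k.castSucc

/-- The highest-weight tableau-tuple of shape-tuple `λ`: its `k`-th component is the
highest-weight tableau of shape `λ⁽ᵏ⁾` with entries from `[i_{k-1}+1, i_k]`. -/
def highestTabs {r : ℕ} (ι : Fin (r + 1) → ℕ) (lam : Fin r → List ℕ) :
    Fin r → List (List ℕ) :=
  fun k => highestTab (lam k) (ι k.castSucc + 1)

/-! ## Matrices, row/column words and bicrystal operators -/

/-- The row word of a nonnegative integer matrix: record `M i j` copies of the (1-based) row
index `i + 1` for each entry, reading columns top-to-bottom, left to right. -/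
def rowWord {m n : ℕ} (M : Matrix (Fin m) (Fin n) ℕ) : List ℕ :=
  (List.finRange n).flatMap fun j => (List.finRange m).flatMap fun i =>
    List.replicate (M i j) ((i : ℕ) + 1)

/-- The column word: record `M i j` copies of the (1-based) column index `j + 1` for each
entry, reading rows left-to-right, top to bottom. -/
def colWord {m n : ℕ} (M : Matrix (Fin m) (Fin n) ℕ) : List ℕ :=
  (List.finRange m).flatMap fun i => (List.finRange n).flatMap fun j =>
    List.replicate (M i j) ((j : ℕ) + 1)

/-- The list of matrix cells producing the successive letters of `rowWord M`. -/
def rowCells {m n : ℕ} (M : Matrix (Fin m) (Fin n) ℕ) : List (Fin m × Fin n) :=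
  (List.finRange n).flatMap fun j => (List.finRange m).flatMap fun i =>
    List.replicate (M i j) (i, j)

/-- The list of matrix cells producing the successive letters of `colWord M`. -/
def colCells {m n : ℕ} (M : Matrix (Fin m) (Fin n) ℕ) : List (Fin m × Fin n) :=
  (List.finRange m).flatMap fun i => (List.finRange n).flatMap fun j =>
    List.replicate (M i j) (i, j)

/-- Subtract `1` at the cell `c` and add `1` at the cell directly below. -/
def shiftDown {m n : ℕ} (M : Matrix (Fin m) (Fin n) ℕ) (c : Fin m × Fin n) :
    Matrix (Fin m) (Fin n) ℕ := fun a b =>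
  if a = c.1 ∧ b = c.2 then M a b - 1
  else if (a : ℕ) = (c.1 : ℕ) + 1 ∧ b = c.2 then M a b + 1
  else M a b

/-- Subtract `1` at the cell `c` and add `1` at the cell directly above. -/
def shiftUp {m n : ℕ} (M : Matrix (Fin m) (Fin n) ℕ) (c : Fin m × Fin n) :
    Matrix (Fin m) (Fin n) ℕ := fun a b =>
  if a = c.1 ∧ b = c.2 then M a b - 1
  else if (a : ℕ) + 1 = (c.1 : ℕ) ∧ b = c.2 then M a b + 1
  else M a b

/-- Subtract `1` at the cell `c` and add `1` at the cell directly to the right. -/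
def shiftRight {m n : ℕ} (M : Matrix (Fin m) (Fin n) ℕ) (c : Fin m × Fin n) :
    Matrix (Fin m) (Fin n) ℕ := fun a b =>
  if a = c.1 ∧ b = c.2 then M a b - 1
  else if a = c.1 ∧ (b : ℕ) = (c.2 : ℕ) + 1 then M a b + 1
  else M a b

/-- Subtract `1` at the cell `c` and add `1` at the cell directly to the left. -/
def shiftLeft {m n : ℕ} (M : Matrix (Fin m) (Fin n) ℕ) (c : Fin m × Fin n) :
    Matrix (Fin m) (Fin n) ℕ := fun a b =>
  if a = c.1 ∧ b = c.2 then M a b - 1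
  else if a = c.1 ∧ (b : ℕ) + 1 = (c.2 : ℕ) then M a b + 1
  else M a b

/-- The row bicrystal lowering operator `f_i^row`, transporting `f_i` through `rowWord`. -/
def fRow {m n : ℕ} (i : ℕ) (M : Matrix (Fin m) (Fin n) ℕ) :
    Option (Matrix (Fin m) (Fin n) ℕ) :=
  (fPos i (rowWord M)).bind fun p => ((rowCells M)[p]?).map fun c => shiftDown M c

/-- The row bicrystal raising operator `e_i^row`, transporting `e_i` through `rowWord`. -/
def eRow {m n : ℕ} (i : ℕ) (M : Matrix (Fin m) (Fin n) ℕ) :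
    Option (Matrix (Fin m) (Fin n) ℕ) :=
  (ePos i (rowWord M)).bind fun p => ((rowCells M)[p]?).map fun c => shiftUp M c

/-- The column bicrystal lowering operator `f_j^col`, transporting `f_j` through `colWord`. -/
def fCol {m n : ℕ} (j : ℕ) (M : Matrix (Fin m) (Fin n) ℕ) :
    Option (Matrix (Fin m) (Fin n) ℕ) :=
  (fPos j (colWord M)).bind fun p => ((colCells M)[p]?).map fun c => shiftRight M c

/-- The column bicrystal raising operator `e_j^col`, transporting `e_j` through `colWord`. -/
def eCol {m n : ℕ} (j : ℕ) (M : Matrix (Fin m) (Fin n) ℕ) :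
    Option (Matrix (Fin m) (Fin n) ℕ) :=
  (ePos j (colWord M)).bind fun p => ((colCells M)[p]?).map fun c => shiftLeft M c

/-- The pre-crystal graph `M^row_{m,n}`: vertices are all matrices in `Mat_{m,n}(ℤ≥0)`,
weights are row-sums (the weight of the row word), edges `M →ᵢ f_i^row(M)`. -/
def MRowGraph (m n : ℕ) : PCG (Matrix (Fin m) (Fin n) ℕ) ℕ (Multiset ℕ) where
  verts := Set.univ
  wt := fun M => ↑(rowWord M)
  E := fun i M M' => 1 ≤ i ∧ i < m ∧ fRow i M = some M'

/-- The pre-crystal graph `M^col_{m,n}`. -/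
def MColGraph (m n : ℕ) : PCG (Matrix (Fin m) (Fin n) ℕ) ℕ (Multiset ℕ) where
  verts := Set.univ
  wt := fun M => ↑(colWord M)
  E := fun j M M' => 1 ≤ j ∧ j < n ∧ fCol j M = some M'

/-- The matrix bicrystal graph `M_{m,n}`, with edges labelled `i^row` (`Sum.inl i`) and
`j^col` (`Sum.inr j`), and weight the pair (row-sum tuple, column-sum tuple). -/
def MatGraph (m n : ℕ) :
    PCG (Matrix (Fin m) (Fin n) ℕ) (ℕ ⊕ ℕ) (Multiset ℕ × Multiset ℕ) where
  verts := Set.univ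
  wt := fun M => (↑(rowWord M), ↑(colWord M))
  E := fun l M M' =>
    match l with
    | Sum.inl i => 1 ≤ i ∧ i < m ∧ fRow i M = some M'
    | Sum.inr j => 1 ≤ j ∧ j < n ∧ fCol j M = some M'

/-- The `(I|J)`-filtered matrix bicrystal graph `M^{I|J}_{m,n}`: delete the edges labelled
`i^row` with `i ∈ I` and `j^col` with `j ∈ J`. -/
def FilteredMatGraph (m n : ℕ) (I J : Set ℕ) :
    PCG (Matrix (Fin m) (Fin n) ℕ) (ℕ ⊕ ℕ) (Multiset ℕ × Multiset ℕ) where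
  verts := Set.univ
  wt := fun M => (↑(rowWord M), ↑(colWord M))
  E := fun l M M' =>
    match l with
    | Sum.inl i => i ∉ I ∧ 1 ≤ i ∧ i < m ∧ fRow i M = some M'
    | Sum.inr j => j ∉ J ∧ 1 ≤ j ∧ j < n ∧ fCol j M = some M'

/-- `filterRSK_{I|J}` at the level of reading words: apply the insertion tableau map to each
component of the filtrations of the row and column words, recording reading words. -/
def filterRSKw {m n r s : ℕ} (ι : Fin (r + 1) → ℕ) (κ : Fin (s + 1) → ℕ)
    (M : Matrix (Fin m) (Fin n) ℕ) : (Fin r → List ℕ) × (Fin s → List ℕ) :=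
  (fun k => readingWord (tabOf (filterWord ι (rowWord M) k)),
   fun k => readingWord (tabOf (filterWord κ (colWord M) k)))

/-- `filterRSK_{I|J}` at the level of tableaux. -/
def filterRSKt {m n r s : ℕ} (ι : Fin (r + 1) → ℕ) (κ : Fin (s + 1) → ℕ)
    (M : Matrix (Fin m) (Fin n) ℕ) :
    (Fin r → List (List ℕ)) × (Fin s → List (List ℕ)) :=
  (fun k => tabOf (filterWord ι (rowWord M) k),
   fun k => tabOf (filterWord κ (colWord M) k))

/-- A matrix is a highest-weight vertex of `M^{I|J}_{m,n}`:
`e_i^row(M) = ∅` for all `i ∉ I` and `e_j^col(M) = ∅` for all `j ∉ J`. -/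
def MatHighest {m n : ℕ} (I J : Set ℕ) (M : Matrix (Fin m) (Fin n) ℕ) : Prop :=
  (∀ i, 1 ≤ i → i < m → i ∉ I → eRow i M = none) ∧
  (∀ j, 1 ≤ j → j < n → j ∉ J → eCol j M = none)

/-- A set of matrices is `(I|J)`-bicrystal closed if it is closed under the bicrystal
operators `e_i^row, f_i^row` (`i ∉ I`) and `e_j^col, f_j^col` (`j ∉ J`). -/
def BicrystalClosed {m n : ℕ} (I J : Set ℕ) (S : Set (Matrix (Fin m) (Fin n) ℕ)) : Prop :=
  ∀ M ∈ S,
    (∀ i, 1 ≤ i → i < m → i ∉ I →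
      (∀ N, fRow i M = some N → N ∈ S) ∧ (∀ N, eRow i M = some N → N ∈ S)) ∧
    (∀ j, 1 ≤ j → j < n → j ∉ J →
      (∀ N, fCol j M = some N → N ∈ S) ∧ (∀ N, eCol j M = some N → N ∈ S))

/-- The induced pre-crystal subgraph of `M^{I|J}_{m,n}` on a set `S` of matrices. -/
def inducedMatGraph (m n : ℕ) (I J : Set ℕ) (S : Set (Matrix (Fin m) (Fin n) ℕ)) :
    PCG (Matrix (Fin m) (Fin n) ℕ) (ℕ ⊕ ℕ) (Multiset ℕ × Multiset ℕ) where
  verts := S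
  wt := fun M => (↑(rowWord M), ↑(colWord M))
  E := (FilteredMatGraph m n I J).E

/-- The disjoint union, over the highest-weight matrices `M₀ ∈ S` (hence with multiplicity
`c_{λ|μ}` for each filtered partition-tuple `(λ|μ)`), of copies of `B_{λ,m} □ B_{μ,n}` where
`(λ|μ)` is the shape of `filterRSK_{I|J}(M₀)`. -/
def sumCopiesGraph {m n : ℕ} {r s : ℕ} (ι : Fin (r + 1) → ℕ) (κ : Fin (s + 1) → ℕ)
    (S : Set (Matrix (Fin m) (Fin n) ℕ)) :
    PCG (Matrix (Fin m) (Fin n) ℕ × ((Fin r → List ℕ) × (Fin s → List ℕ))) (ℕ ⊕ ℕ)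
      ((Fin r → Multiset ℕ) × (Fin s → Multiset ℕ)) where
  verts := {Mp | Mp.1 ∈ S ∧ MatHighest (Set.range ι) (Set.range κ) Mp.1 ∧
    ∃ lam mu, IsFilteredShape ι lam ∧ IsFilteredShape κ mu ∧
      filterRSKt ι κ Mp.1 = (highestTabs ι lam, highestTabs κ mu) ∧
      Mp.2 ∈ (PCG.prod (BPiGraph ι lam) (BPiGraph κ mu)).verts}
  wt := fun Mp => (PCG.prod (TabPiGraph ι) (TabPiGraph κ)).wt Mp.2
  E := fun l Mp Mq =>
    Mp.1 = Mq.1 ∧ (PCG.prod (TabPiGraph ι) (TabPiGraph κ)).E l Mp.2 Mq.2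

/-! ## 1-based matrix entries and shape vectors -/

/-- The `(i,j)` entry of `M` in 1-based coordinates, with the convention that entries outside
the matrix are `0`. -/
def ent {m n : ℕ} (M : Matrix (Fin m) (Fin n) ℕ) (i j : ℕ) : ℕ :=
  if h : 1 ≤ i ∧ i ≤ m ∧ 1 ≤ j ∧ j ≤ n then M ⟨i - 1, by omega⟩ ⟨j - 1, by omega⟩ else 0

/-- The partition `(lam (lo+1), lam (lo+2), …, lam (lo+size))` with trailing zero parts
removed: the shape of the block of a filtered partition-tuple written as an integer vector. -/
def blockShape (lam : ℕ → ℕ) (lo size : ℕ) : List ℕ :=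
  ((List.range size).map fun t => lam (lo + t + 1)).filter fun x => decide (0 < x)

/-- The highest-weight tableau-tuple of the filtered partition-tuple written as an integer
vector `lam : ℕ → ℕ` (1-based). -/
def highestFromVec {r : ℕ} (ι : Fin (r + 1) → ℕ) (lam : ℕ → ℕ) : Fin r → List (List ℕ) :=
  fun k => highestTab (blockShape lam (ι k.castSucc) (ι k.succ - ι k.castSucc))
    (ι k.castSucc + 1)

/-! ## Partial permutations and matrix Schubert combinatorics -/

/-- A partial permutation: at most one `1` in each row and column; encoded as an injective
partial function from rows to columns (`none` encodes `∞`). -/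
def IsPartialPerm {m n : ℕ} (w : Fin m → Option (Fin n)) : Prop :=
  ∀ a a' b, w a = some b → w a' = some b → a = a'

/-- The cell `(i, j)` lies in the Rothe diagram `D(w)`: it is not weakly below nor weakly
right of a dot of the partial permutation matrix. -/
def InD {m n : ℕ} (w : Fin m → Option (Fin n)) (i : Fin m) (j : Fin n) : Prop :=
  (∀ b, w i = some b → (j : ℕ) < (b : ℕ)) ∧ (∀ a, a ≤ i → w a ≠ some j)

/-- The row descent positions of `w` (1-based): rows `i` such that the rightmost box of
`D(w)` in row `i` is strictly right of the rightmost box in row `i + 1`. -/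
def DescRow {m n : ℕ} (w : Fin m → Option (Fin n)) : Set ℕ :=
  {i | ∃ (h1 : 1 ≤ i) (h2 : i < m), ∃ j : Fin n,
    InD w ⟨i - 1, by omega⟩ j ∧ ∀ j' : Fin n, InD w ⟨i, h2⟩ j' → (j' : ℕ) < (j : ℕ)}

/-- The column descent positions of `w` (1-based). -/
def DescCol {m n : ℕ} (w : Fin m → Option (Fin n)) : Set ℕ :=
  {j | ∃ (h1 : 1 ≤ j) (h2 : j < n), ∃ i : Fin m,
    InD w i ⟨j - 1, by omega⟩ ∧ ∀ i' : Fin m, InD w i' ⟨j, h2⟩ → (i' : ℕ) < (i : ℕ)}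

/-- The rank function `r_w(i,j)`: the rank of the northwest `i × j` submatrix of the partial
permutation matrix, i.e. the number of dots in that submatrix. -/
noncomputable def rankFn {m n : ℕ} (w : Fin m → Option (Fin n)) (i j : ℕ) : ℕ :=
  Set.ncard {a : Fin m | (a : ℕ) < i ∧ ∃ b : Fin n, w a = some b ∧ (b : ℕ) < j}

/-- The matrix Schubert variety `X_w ⊆ Mat_{m,n}(ℂ)`: matrices whose northwest `i × j`
submatrices have rank at most `r_w(i,j)`. -/
def XSchubert {m n : ℕ} (w : Fin m → Option (Fin n)) : Set (Matrix (Fin m) (Fin n) ℂ) :=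
  {A | ∀ (i : ℕ) (hi : i ≤ m) (j : ℕ) (hj : j ≤ n),
    (A.submatrix (Fin.castLE hi) (Fin.castLE hj)).rank ≤ rankFn w i j}

/-- `g` is block-diagonal with diagonal blocks of sizes `i₁ - i₀, …, i_r - i_{r-1}`. -/
def IsBlockDiag {m : ℕ} {r : ℕ} (ι : Fin (r + 1) → ℕ) (g : Matrix (Fin m) (Fin m) ℂ) :
    Prop :=
  ∀ a b : Fin m,
    (¬ ∃ k : Fin r, ι k.castSucc ≤ (a : ℕ) ∧ (a : ℕ) < ι k.succ ∧
        ι k.castSucc ≤ (b : ℕ) ∧ (b : ℕ) < ι k.succ) → g a b = 0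

/-- `(p, q)` (0-based) is a cell of the essential set `E(w)`. -/
def EssCell {m n : ℕ} (w : Fin m → Option (Fin n)) (p : Fin m) (q : Fin n) : Prop :=
  InD w p q ∧ (∀ hq : (q : ℕ) + 1 < n, ¬ InD w p ⟨(q : ℕ) + 1, hq⟩) ∧
    (∀ hp : (p : ℕ) + 1 < m, ¬ InD w ⟨(p : ℕ) + 1, hp⟩ q)

/-- `N` carries an antidiagonal of some Fulton generator of the Schubert determinantal ideal
of `w`: there are an essential cell `(p,q)`, `t = r_w(p,q) + 1` rows `r₁ < ⋯ < r_t ≤ p` and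
columns `c₁ < ⋯ < c_t ≤ q` with `N_{r_s, c_{t+1-s}} ≥ 1` for all `s`. -/
def CarriesAntidiag {m n : ℕ} (w : Fin m → Option (Fin n))
    (N : Matrix (Fin m) (Fin n) ℕ) : Prop :=
  ∃ (p : Fin m) (q : Fin n), EssCell w p q ∧
    ∃ (rr : Fin (rankFn w ((p : ℕ) + 1) ((q : ℕ) + 1) + 1) → Fin m)
      (cc : Fin (rankFn w ((p : ℕ) + 1) ((q : ℕ) + 1) + 1) → Fin n),
      StrictMono rr ∧ StrictMono cc ∧ (∀ t, rr t ≤ p) ∧ (∀ t, cc t ≤ q) ∧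
      ∀ t, 1 ≤ N (rr t) (cc t.rev)


/-! ### Auxiliary machinery for Statement 7 -/

def rkP (P : ℕ → Bool) (w : List ℕ) (p : ℕ) : ℕ := (w.take p).countP P

lemma getD_append_length (pre : List ℕ) (a : ℕ) (suf : List ℕ) :
    (pre ++ a :: suf).getD pre.length 0 = a := by
  induction pre with
  | nil => rfl
  | cons x t ih => simpa using ih

/-- The step function of the bracket scan. -/
def stp (i : ℕ) (st : List ℕ × List ℕ) (p : ℕ × ℕ) : List ℕ × List ℕ :=
  if p.2 = i + 1 then (st.1, p.1 :: st.2)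
  else if p.2 = i then
    match st.2 with
    | [] => (p.1 :: st.1, [])
    | _ :: rest => (st.1, rest)
  else st

lemma bracketScan_eq (i : ℕ) (w : List ℕ) :
    bracketScan i w = ((w.zipIdx 0).map Prod.swap).foldl (stp i) ([], []) := rfl

lemma scan_inv (i : ℕ) (W : List ℕ) (suf : List ℕ) :
    ∀ (pre : List ℕ), W = pre ++ suf →
    ∀ st : List ℕ × List ℕ,
    (∀ p ∈ st.1, p < W.length ∧ W.getD p 0 = i) →
    (∀ p ∈ st.2, p < W.length ∧ W.getD p 0 = i + 1) →
    (∀ p ∈ (List.foldl (stp i) st (((suf.zipIdx pre.length).map Prod.swap))).1,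
        p < W.length ∧ W.getD p 0 = i) ∧
    (∀ p ∈ (List.foldl (stp i) st (((suf.zipIdx pre.length).map Prod.swap))).2,
        p < W.length ∧ W.getD p 0 = i + 1) := by
  induction suf with
  | nil => intro pre hW st h1 h2; exact ⟨h1, h2⟩
  | cons a suf' ih =>
    intro pre hW st h1 h2
    have hfold : (((a :: suf').zipIdx pre.length).map Prod.swap)
        = (pre.length, a) :: ((suf'.zipIdx (pre.length + 1)).map Prod.swap) := rfl
    rw [hfold, List.foldl_cons]
    have hW' : W = (pre ++ [a]) ++ suf' := by rw [hW]; simp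
    have hlen : pre.length < W.length := by rw [hW]; simp
    have hgetD : W.getD pre.length 0 = a := by rw [hW]; exact getD_append_length _ _ _
    have hlen' : (pre ++ [a]).length = pre.length + 1 := by simp
    have := ih (pre ++ [a]) hW' (stp i st (pre.length, a)) ?_ ?_
    · rwa [hlen'] at this
    · -- invariant for first component
      intro p hp
      unfold stp at hp
      by_cases ha1 : a = i + 1
      · simp [ha1] at hp; exact h1 p hp
      · by_cases ha2 : a = i
        · simp [ha1, ha2] at hp
          cases hst : st.2 with
          | nil =>
            rw [hst] at hp; simp at hp
            rcases hp with rfl | hp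
            · exact ⟨hlen, by rw [hgetD, ha2]⟩
            · exact h1 p hp
          | cons b rest => rw [hst] at hp; simp at hp; exact h1 p hp
        · simp [ha1, ha2] at hp; exact h1 p hp
    · intro p hp
      unfold stp at hp
      by_cases ha1 : a = i + 1
      · simp [ha1] at hp
        rcases hp with rfl | hp
        · exact ⟨hlen, by rw [hgetD, ha1]⟩
        · exact h2 p hp
      · by_cases ha2 : a = i
        · simp [ha1, ha2] at hp
          cases hst : st.2 with
          | nil => rw [hst] at hp; simp at hp
          | cons b rest =>
            rw [hst] at hp; simp at hp
            exact h2 p (by rw [hst]; exact List.mem_cons_of_mem _ hp)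
        · simp [ha1, ha2] at hp; exact h2 p hp

lemma fPos_spec {i : ℕ} {w : List ℕ} {p : ℕ} (h : fPos i w = some p) :
    p < w.length ∧ w.getD p 0 = i := by
  have hmem : p ∈ (bracketScan i w).1 :=
    List.mem_of_mem_head? (by rw [fPos] at h; rw [h]; rfl)
  have := (scan_inv i w w [] rfl ([], []) (by simp) (by simp)).1
  rw [bracketScan_eq] at hmem
  exact this p hmem


/-- The simulation relation between positions in `W` and positions in `W.filter P`. -/
def Rr (P : ℕ → Bool) (W : List ℕ) (p p' : ℕ) : Prop :=
  p < W.length ∧ P (W.getD p 0) = true ∧ p' = rkP P W p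

lemma scan_sim (i : ℕ) (P : ℕ → Bool) (hPi : P i = true) (hPi1 : P (i + 1) = true)
    (W : List ℕ) (suf : List ℕ) :
    ∀ (pre : List ℕ), W = pre ++ suf →
    ∀ (st st' : List ℕ × List ℕ),
    List.Forall₂ (Rr P W) st.1 st'.1 → List.Forall₂ (Rr P W) st.2 st'.2 →
    List.Forall₂ (Rr P W) (List.foldl (stp i) st (((suf.zipIdx pre.length).map Prod.swap))).1
      (List.foldl (stp i) st' ((((suf.filter P).zipIdx (pre.countP P)).map Prod.swap))).1 ∧
    List.Forall₂ (Rr P W) (List.foldl (stp i) st (((suf.zipIdx pre.length).map Prod.swap))).2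
      (List.foldl (stp i) st' ((((suf.filter P).zipIdx (pre.countP P)).map Prod.swap))).2 := by
  induction suf with
  | nil => intro pre hW st st' h1 h2; exact ⟨h1, h2⟩
  | cons a suf' ih =>
    intro pre hW st st' h1 h2
    obtain ⟨s1, s2⟩ := st
    obtain ⟨t1, t2⟩ := st'
    have hW' : W = (pre ++ [a]) ++ suf' := by rw [hW]; simp
    have hlen : pre.length < W.length := by rw [hW]; simp
    have hgetD : W.getD pre.length 0 = a := by rw [hW]; exact getD_append_length _ _ _
    have hrk : rkP P W pre.length = pre.countP P := by
      rw [rkP, hW, List.take_left]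
    have hfold : (((a :: suf').zipIdx pre.length).map Prod.swap)
        = (pre.length, a) :: ((suf'.zipIdx (pre.length + 1)).map Prod.swap) := rfl
    rw [hfold, List.foldl_cons]
    have hlen' : (pre ++ [a]).length = pre.length + 1 := by simp
    by_cases hPa : P a = true
    · have hcntP : (pre ++ [a]).countP P = pre.countP P + 1 := by
        rw [List.countP_append]; simp [hPa]
      have hffold : ((((a :: suf').filter P).zipIdx (pre.countP P)).map Prod.swap)
          = (pre.countP P, a) :: (((suf'.filter P).zipIdx (pre.countP P + 1)).map Prod.swap) := by
        rw [List.filter_cons_of_pos hPa]; rfl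
      rw [hffold, List.foldl_cons]
      have key : List.Forall₂ (Rr P W) (stp i (s1, s2) (pre.length, a)).1
            (stp i (t1, t2) (pre.countP P, a)).1 ∧
          List.Forall₂ (Rr P W) (stp i (s1, s2) (pre.length, a)).2
            (stp i (t1, t2) (pre.countP P, a)).2 := by
        by_cases ha1 : a = i + 1
        · simp only [stp, ha1, if_pos rfl]
          exact ⟨h1, List.Forall₂.cons ⟨hlen, by rw [hgetD, ha1]; exact hPi1,
            hrk.symm⟩ h2⟩
        · by_cases ha2 : a = i
          · cases h2 with
            | nil =>
              simp only [stp, if_neg ha1, if_pos ha2]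
              exact ⟨List.Forall₂.cons ⟨hlen, by rw [hgetD, ha2]; exact hPi,
                hrk.symm⟩ h1, List.Forall₂.nil⟩
            | cons hR hrest =>
              simp only [stp, if_neg ha1, if_pos ha2]
              exact ⟨h1, hrest⟩
          · simp only [stp, if_neg ha1, if_neg ha2]
            exact ⟨h1, h2⟩
      have := ih (pre ++ [a]) hW' _ _ key.1 key.2
      rwa [hlen', hcntP] at this
    · simp only [Bool.not_eq_true] at hPa
      have ha1 : a ≠ i + 1 := fun h => by simp [h, hPi1] at hPa
      have ha2 : a ≠ i := fun h => by simp [h, hPi] at hPa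
      have hcntP : (pre ++ [a]).countP P = pre.countP P := by
        rw [List.countP_append]; simp [hPa]
      have hffold : ((a :: suf').filter P) = suf'.filter P :=
        List.filter_cons_of_neg (by simp [hPa])
      have hstp : stp i (s1, s2) (pre.length, a) = (s1, s2) := by
        simp only [stp, if_neg ha1, if_neg ha2]
      rw [hstp, hffold]
      have := ih (pre ++ [a]) hW' (s1, s2) (t1, t2) h1 h2
      rwa [hlen', hcntP] at this



lemma set_getD_self {w : List ℕ} {p : ℕ} {a : ℕ} (hp : p < w.length)
    (h : w.getD p 0 = a) : w.set p a = w := by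
  induction w generalizing p with
  | nil => simp at hp
  | cons x t ih =>
    cases p with
    | zero => simp_all [List.getD]
    | succ q =>
      simp only [List.set_cons_succ, List.cons.injEq, true_and]
      exact ih (by simpa using hp) (by simpa [List.getD] using h)

lemma filter_set_true {P : ℕ → Bool} {w : List ℕ} {p : ℕ} (hp : p < w.length)
    (hold : P (w.getD p 0) = true) {a : ℕ} (ha : P a = true) :
    (w.set p a).filter P = (w.filter P).set (rkP P w p) a := by
  induction w generalizing p with
  | nil => simp at hp
  | cons x t ih =>
    cases p with
    | zero =>
      simp only [List.getD_cons_zero] at hold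
      simp [rkP, List.filter_cons, hold, ha]
    | succ q =>
      have hq : q < t.length := by simpa using hp
      have hold' : P (t.getD q 0) = true := by simpa [List.getD] using hold
      by_cases hx : P x = true
      · simp [rkP, List.filter_cons, hx, ih hq hold', List.countP_cons]
      · simp only [Bool.not_eq_true] at hx
        simp [rkP, List.filter_cons, hx, ih hq hold', List.countP_cons]

lemma filter_set_false {P : ℕ → Bool} {w : List ℕ} {p : ℕ} (hp : p < w.length)
    (hold : P (w.getD p 0) = false) {a : ℕ} (ha : P a = false) :
    (w.set p a).filter P = w.filter P := by
  induction w generalizing p with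
  | nil => simp at hp
  | cons x t ih =>
    cases p with
    | zero =>
      simp only [List.getD_cons_zero] at hold
      simp [List.filter_cons, hold, ha]
    | succ q =>
      have hq : q < t.length := by simpa using hp
      have hold' : P (t.getD q 0) = false := by simpa [List.getD] using hold
      by_cases hx : P x = true
      · simp [List.filter_cons, hx, ih hq hold']
      · simp only [Bool.not_eq_true] at hx
        simp [List.filter_cons, hx, ih hq hold']

lemma getD_filter_rank {P : ℕ → Bool} {w : List ℕ} {p : ℕ} (hp : p < w.length)
    (hold : P (w.getD p 0) = true) :
    rkP P w p < (w.filter P).length ∧ (w.filter P).getD (rkP P w p) 0 = w.getD p 0 := by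
  induction w generalizing p with
  | nil => simp at hp
  | cons x t ih =>
    cases p with
    | zero =>
      simp only [List.getD_cons_zero] at hold ⊢
      simp [rkP, List.filter_cons, hold]
    | succ q =>
      have hq : q < t.length := by simpa using hp
      have hold' : P (t.getD q 0) = true := by simpa [List.getD] using hold
      have := ih hq hold'
      by_cases hx : P x = true
      · simpa [rkP, List.filter_cons, hx, List.countP_cons, List.getD] using this
      · simp only [Bool.not_eq_true] at hx
        simpa [rkP, List.filter_cons, hx, List.getD] using this

lemma rank_surj {P : ℕ → Bool} {w : List ℕ} {q : ℕ} (hq : q < (w.filter P).length) :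
    ∃ p, p < w.length ∧ P (w.getD p 0) = true ∧ rkP P w p = q := by
  induction w generalizing q with
  | nil => simp at hq
  | cons x t ih =>
    by_cases hx : P x = true
    · cases q with
      | zero => exact ⟨0, by simp, by simpa, by simp [rkP]⟩
      | succ q' =>
        have hq' : q' < (t.filter P).length := by
          simpa [List.filter_cons, hx] using hq
        obtain ⟨p, hp, hPp, hr⟩ := ih hq'
        exact ⟨p + 1, by simpa using hp, by simpa [List.getD] using hPp,
          by simp [rkP, List.countP_cons, hx, ← hr]⟩
    · simp only [Bool.not_eq_true] at hx
      have hq' : q < (t.filter P).length := by simpa [List.filter_cons, hx] using hq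
      obtain ⟨p, hp, hPp, hr⟩ := ih hq'
      exact ⟨p + 1, by simpa using hp, by simpa [List.getD] using hPp,
        by simp [rkP, List.countP_cons, hx, ← hr]⟩

lemma rank_lt_of_lt {P : ℕ → Bool} {w : List ℕ} {p₁ p₂ : ℕ} (h : p₁ < p₂)
    (hp : p₁ < w.length) (hP : P (w.getD p₁ 0) = true) :
    rkP P w p₁ < rkP P w p₂ := by
  have h1 : rkP P w (p₁ + 1) = rkP P w p₁ + 1 := by
    unfold rkP
    rw [List.take_succ]
    have hg : w[p₁]? = some (w.getD p₁ 0) := by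
      rw [List.getD_eq_getElem _ _ hp, List.getElem?_eq_getElem hp]
    have hP' : P (w[p₁]?.getD 0) = true := by rw [hg]; exact hP
    rw [hg]
    simp [List.countP_append, List.countP_cons, hP, hP']
  have h2 : rkP P w (p₁ + 1) ≤ rkP P w p₂ := by
    unfold rkP
    have hio : w.take p₂ = (w.take p₂).take (p₁+1) ++ (w.take p₂).drop (p₁+1) :=
      (List.take_append_drop _ _).symm
    rw [List.take_take] at hio
    have hmin : min (p₁+1) p₂ = p₁ + 1 := by omega
    rw [hmin] at hio
    calc (w.take (p₁+1)).countP P ≤ (w.take (p₁+1)).countP P + ((w.take p₂).drop (p₁+1)).countP P := Nat.le_add_right _ _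
      _ = (w.take p₂).countP P := by rw [← List.countP_append, ← hio]
  omega

lemma rank_inj {P : ℕ → Bool} {w : List ℕ} {p₁ p₂ : ℕ}
    (h1 : p₁ < w.length) (h2 : p₂ < w.length)
    (hP1 : P (w.getD p₁ 0) = true) (hP2 : P (w.getD p₂ 0) = true)
    (h : rkP P w p₁ = rkP P w p₂) : p₁ = p₂ := by
  rcases lt_trichotomy p₁ p₂ with hlt | heq | hgt
  · exact absurd h (Nat.ne_of_lt (rank_lt_of_lt hlt h1 hP1))
  · exact heq
  · exact absurd h.symm (Nat.ne_of_lt (rank_lt_of_lt hgt h2 hP2))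

lemma map_set_eq {f : ℕ → Bool} {w : List ℕ} {p : ℕ} {a : ℕ}
    (h : f (w.getD p 0) = f a) : (w.set p a).map f = w.map f := by
  induction w generalizing p with
  | nil => simp
  | cons x t ih =>
    cases p with
    | zero => simp_all [List.getD]
    | succ q =>
      simp only [List.set_cons_succ, List.map_cons, List.cons.injEq, true_and]
      exact ih (by simpa [List.getD] using h)

lemma countP_eq_of_map_eq {P : ℕ → Bool} {u v : List ℕ} (h : u.map P = v.map P) :
    u.countP P = v.countP P := by
  induction u generalizing v with
  | nil => cases v <;> simp_all
  | cons x t ih =>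
    cases v with
    | nil => simp at h
    | cons y s =>
      simp only [List.map_cons, List.cons.injEq] at h
      simp [List.countP_cons, h.1, ih h.2]

lemma rank_congr {P : ℕ → Bool} {u v : List ℕ} (h : u.map P = v.map P) (n : ℕ) :
    rkP P u n = rkP P v n := by
  unfold rkP
  apply countP_eq_of_map_eq
  rw [List.map_take, List.map_take, h]

lemma filter_eq_of_map_eq {P : ℕ → Bool} {u v : List ℕ} (h : u.map P = v.map P) :
    (u.filter P).length = (v.filter P).length := by
  rw [← List.countP_eq_length_filter, ← List.countP_eq_length_filter]
  exact countP_eq_of_map_eq h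



lemma bracketScan_rel (i : ℕ) {P : ℕ → Bool} (hPi : P i = true) (hPi1 : P (i + 1) = true)
    (w : List ℕ) :
    List.Forall₂ (Rr P w) (bracketScan i w).1 (bracketScan i (w.filter P)).1 ∧
    List.Forall₂ (Rr P w) (bracketScan i w).2 (bracketScan i (w.filter P)).2 := by
  have := scan_sim i P hPi hPi1 w w [] rfl ([], []) ([], []) List.Forall₂.nil List.Forall₂.nil
  simp only [List.length_nil, List.countP_nil] at this
  rw [bracketScan_eq, bracketScan_eq]
  exact this

lemma head?_rel {R : ℕ → ℕ → Prop} {l l' : List ℕ} (h : List.Forall₂ R l l')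
    {a : ℕ} (ha : l.head? = some a) : ∃ b, l'.head? = some b ∧ R a b := by
  cases h with
  | nil => simp at ha
  | cons hR hrest =>
    simp only [List.head?_cons, Option.some.injEq] at ha
    exact ⟨_, rfl, ha ▸ hR⟩

lemma head?_rel_rev {R : ℕ → ℕ → Prop} {l l' : List ℕ} (h : List.Forall₂ R l l')
    {b : ℕ} (hb : l'.head? = some b) : ∃ a, l.head? = some a ∧ R a b := by
  cases h with
  | nil => simp at hb
  | cons hR hrest =>
    simp only [List.head?_cons, Option.some.injEq] at hb
    exact ⟨_, rfl, hb ▸ hR⟩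

lemma fWord_some_iff {i : ℕ} {w v : List ℕ} :
    fWord i w = some v ↔ ∃ p, fPos i w = some p ∧ v = w.set p (i + 1) := by
  unfold fWord
  cases h : fPos i w with
  | none => simp
  | some p => simp [eq_comm]

lemma fPos_filter_some {i : ℕ} {P : ℕ → Bool} (hPi : P i = true) (hPi1 : P (i + 1) = true)
    {w : List ℕ} {p : ℕ} (h : fPos i w = some p) :
    p < w.length ∧ P (w.getD p 0) = true ∧ fPos i (w.filter P) = some (rkP P w p) := by
  have h' : (bracketScan i w).1.head? = some p := h
  obtain ⟨b, hb, hR⟩ := head?_rel (bracketScan_rel i hPi hPi1 w).1 h'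
  obtain ⟨h1, h2, h3⟩ := hR
  exact ⟨h1, h2, by show (bracketScan i (w.filter P)).1.head? = _; rw [hb, h3]⟩

lemma fPos_filter_inv {i : ℕ} {P : ℕ → Bool} (hPi : P i = true) (hPi1 : P (i + 1) = true)
    {w : List ℕ} {p' : ℕ} (h : fPos i (w.filter P) = some p') :
    ∃ p, fPos i w = some p ∧ p < w.length ∧ P (w.getD p 0) = true ∧ p' = rkP P w p := by
  have h' : (bracketScan i (w.filter P)).1.head? = some p' := h
  obtain ⟨a, ha, hR⟩ := head?_rel_rev (bracketScan_rel i hPi hPi1 w).1 h'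
  obtain ⟨h1, h2, h3⟩ := hR
  exact ⟨a, ha, h1, h2, h3⟩

lemma fWord_filter_some {i : ℕ} {P : ℕ → Bool} (hPi : P i = true) (hPi1 : P (i + 1) = true)
    {w v : List ℕ} (h : fWord i w = some v) :
    fWord i (w.filter P) = some (v.filter P) := by
  obtain ⟨p, hp, rfl⟩ := fWord_some_iff.1 h
  obtain ⟨h1, h2, h3⟩ := fPos_filter_some hPi hPi1 hp
  rw [fWord, h3, Option.map_some]
  rw [filter_set_true h1 h2 hPi1]

lemma fWord_filter_inv {i : ℕ} {P : ℕ → Bool} (hPi : P i = true) (hPi1 : P (i + 1) = true)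
    {w u : List ℕ} (h : fWord i (w.filter P) = some u) :
    ∃ p, fWord i w = some (w.set p (i + 1)) ∧ p < w.length ∧ P (w.getD p 0) = true ∧
      w.getD p 0 = i ∧ fPos i (w.filter P) = some (rkP P w p) ∧
      u = (w.filter P).set (rkP P w p) (i + 1) := by
  obtain ⟨p', hp', rfl⟩ := fWord_some_iff.1 h
  obtain ⟨p, hp, h1, h2, rfl⟩ := fPos_filter_inv hPi hPi1 hp'
  exact ⟨p, by rw [fWord, hp, Option.map_some], h1, h2, (fPos_spec hp).2, hp', rfl⟩

lemma fWord_filter_other {i : ℕ} {Q : ℕ → Bool} (hQ : Q i = false) (hQ1 : Q (i + 1) = false)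
    {w v : List ℕ} (h : fWord i w = some v) : v.filter Q = w.filter Q := by
  obtain ⟨p, hp, rfl⟩ := fWord_some_iff.1 h
  obtain ⟨h1, h2⟩ := fPos_spec hp
  exact filter_set_false h1 (by rw [h2]; exact hQ) hQ1

lemma fWord_map {i : ℕ} {f : ℕ → Bool} (hf : f i = f (i + 1)) {w v : List ℕ}
    (h : fWord i w = some v) : v.map f = w.map f := by
  obtain ⟨p, hp, rfl⟩ := fWord_some_iff.1 h
  exact map_set_eq (by rw [(fPos_spec hp).2]; exact hf)

lemma fWord_mem_le {i : ℕ} {w v : List ℕ} (h : fWord i w = some v) {x : ℕ} (hx : x ∈ v) :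
    x ∈ w ∨ x = i + 1 := by
  obtain ⟨p, hp, rfl⟩ := fWord_some_iff.1 h
  exact List.mem_or_eq_of_mem_set hx


lemma getD_set_self {w : List ℕ} {p : ℕ} (hp : p < w.length) (a : ℕ) :
    (w.set p a).getD p 0 = a := by
  induction w generalizing p with
  | nil => simp at hp
  | cons x t ih =>
    cases p with
    | zero => rfl
    | succ q => simpa [List.getD] using ih (by simpa using hp)

/-! ### Block-level lemmas for the filtration -/

section Blocks

variable {m r : ℕ} {ι : Fin (r + 1) → ℕ}

/-- The indicator of the `k`-th block of the filtration. -/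
def pk (ι : Fin (r + 1) → ℕ) (k : Fin r) (x : ℕ) : Bool :=
  decide (ι k.castSucc + 1 ≤ x ∧ x ≤ ι k.succ)

lemma filterWord_eq (w : List ℕ) (k : Fin r) :
    filterWord ι w k = w.filter (pk ι k) := rfl

lemma exists_block (hι : IsFiltration m ι) {x : ℕ} (h1 : 1 ≤ x) (h2 : x ≤ m) :
    ∃ k : Fin r, ι k.castSucc < x ∧ x ≤ ι k.succ := by
  obtain ⟨hmono, h0, hlast⟩ := hι
  classical
  have hne : (Finset.univ.filter (fun j : Fin (r + 1) => ι j < x)).Nonempty :=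
    ⟨0, by rw [Finset.mem_filter]; exact ⟨Finset.mem_univ _, by omega⟩⟩
  set j₀ := (Finset.univ.filter (fun j : Fin (r + 1) => ι j < x)).max' hne with hj
  have hj₀ : ι j₀ < x := by
    have h := (Finset.univ.filter (fun j : Fin (r + 1) => ι j < x)).max'_mem hne
    rw [Finset.mem_filter] at h
    exact h.2
  have hlt : j₀ < Fin.last r := by
    rw [← hmono.lt_iff_lt, hlast]; omega
  have hv : (j₀ : ℕ) < r := by simpa [Fin.lt_def] using hlt
  refine ⟨⟨(j₀ : ℕ), hv⟩, ?_, ?_⟩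
  · have hcs : (⟨(j₀ : ℕ), hv⟩ : Fin r).castSucc = j₀ := by
      apply Fin.ext; rfl
    rw [hcs]; exact hj₀
  · by_contra hcon
    push_neg at hcon
    have hmem : ((⟨(j₀ : ℕ), hv⟩ : Fin r).succ)
        ∈ Finset.univ.filter (fun j : Fin (r + 1) => ι j < x) := by
      rw [Finset.mem_filter]
      exact ⟨Finset.mem_univ _, hcon⟩
    have hle := Finset.le_max' _ _ hmem
    have hfin : ((⟨(j₀ : ℕ), hv⟩ : Fin r).succ : ℕ) ≤ (j₀ : ℕ) := hle
    simp only [Fin.val_succ] at hfin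
    omega

lemma not_range_of_block (hι : IsFiltration m ι) {k : Fin r} {l : ℕ}
    (h1 : ι k.castSucc < l) (h2 : l < ι k.succ) : l ∉ Set.range ι := by
  rintro ⟨j, rfl⟩
  rcases le_or_gt j k.castSucc with hj | hj
  · have := hι.1.monotone hj; omega
  · have := hι.1.monotone (Fin.castSucc_lt_iff_succ_le.mp hj); omega

lemma pk_eq_succ {l : ℕ} (hnotin : l ∉ Set.range ι) (k : Fin r) :
    pk ι k l = pk ι k (l + 1) := by
  have h1 : ι k.castSucc ≠ l := fun h => hnotin ⟨_, h⟩
  have h2 : ι k.succ ≠ l := fun h => hnotin ⟨_, h⟩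
  simp only [pk, decide_eq_decide]
  omega

lemma pk_disjoint (hι : IsFiltration m ι) {k k' : Fin r} (hne : k' ≠ k) {x : ℕ}
    (hx1 : ι k.castSucc < x) (hx2 : x ≤ ι k.succ) : pk ι k' x = false := by
  rcases lt_or_gt_of_ne hne with h | h
  · have hval : (k' : ℕ) < (k : ℕ) := h
    have hv : k'.succ ≤ k.castSucc := by
      rw [Fin.le_def]
      simp only [Fin.val_succ, Fin.coe_castSucc]
      omega
    have := hι.1.monotone hv
    simp only [pk, decide_eq_false_iff_not]; omega
  · have hval : (k : ℕ) < (k' : ℕ) := h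
    have hv : k.succ ≤ k'.castSucc := by
      rw [Fin.le_def]
      simp only [Fin.val_succ, Fin.coe_castSucc]
      omega
    have := hι.1.monotone hv
    simp only [pk, decide_eq_false_iff_not]; omega

lemma succ_le_m (hι : IsFiltration m ι) (k : Fin r) : ι k.succ ≤ m := by
  have h := hι.1.monotone (Fin.le_last k.succ)
  rw [hι.2.2] at h; exact h

lemma reconstruct (hι : IsFiltration m ι) :
    ∀ u v : List ℕ, (∀ x ∈ u, 1 ≤ x ∧ x ≤ m) → (∀ x ∈ v, 1 ≤ x ∧ x ≤ m) →
      (∀ k, u.map (pk ι k) = v.map (pk ι k)) →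
      (∀ k, u.filter (pk ι k) = v.filter (pk ι k)) → u = v := by
  intro u
  induction u with
  | nil =>
    intro v _ hv hmap _
    cases v with
    | nil => rfl
    | cons y v' =>
      obtain ⟨k, hk1, hk2⟩ := exists_block hι (hv y (by simp)).1 (hv y (by simp)).2
      have := hmap k
      simp only [List.map_nil, List.map_cons] at this
      exact absurd this (by simp)
  | cons x u' ih =>
    intro v hu hv hmap hfil
    cases v with
    | nil =>
      obtain ⟨k, hk1, hk2⟩ := exists_block hι (hu x (by simp)).1 (hu x (by simp)).2
      have := hmap k
      simp only [List.map_nil, List.map_cons] at this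
      exact absurd this (by simp)
    | cons y v' =>
      obtain ⟨k, hk1, hk2⟩ := exists_block hι (hu x (by simp)).1 (hu x (by simp)).2
      have hpkx : pk ι k x = true := by simp only [pk, decide_eq_true_eq]; omega
      have hmk := hmap k
      simp only [List.map_cons, List.cons.injEq] at hmk
      have hpky : pk ι k y = true := by rw [← hmk.1]; exact hpkx
      have hfk := hfil k
      rw [List.filter_cons_of_pos hpkx, List.filter_cons_of_pos hpky] at hfk
      simp only [List.cons.injEq] at hfk
      obtain ⟨rfl, -⟩ := hfk
      have htail : u' = v' := by
        apply ih v' (fun z hz => hu z (List.mem_cons_of_mem _ hz))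
          (fun z hz => hv z (List.mem_cons_of_mem _ hz))
        · intro k'
          have := hmap k'
          simp only [List.map_cons, List.cons.injEq] at this
          exact this.2
        · intro k'
          have hfk' := hfil k'
          by_cases hb : pk ι k' x = true
          · rw [List.filter_cons_of_pos hb, List.filter_cons_of_pos hb] at hfk'
            simpa using hfk'
          · simp only [Bool.not_eq_true] at hb
            rw [List.filter_cons_of_neg (by simp [hb]),
              List.filter_cons_of_neg (by simp [hb])] at hfk'
            exact hfk'
      rw [htail]

end Blocks

/-! ### Graph-level lemmas -/

section Main

variable {m r : ℕ} {ι : Fin (r + 1) → ℕ}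

lemma pk_self_true (hι : IsFiltration m ι) {k : Fin r} {l : ℕ}
    (hb1 : ι k.castSucc + 1 ≤ l) (hb2 : l < ι k.succ) :
    pk ι k l = true ∧ pk ι k (l + 1) = true := by
  constructor <;> · simp only [pk, decide_eq_true_eq]; omega

/-- An edge of the filtered word graph maps to an edge of the product graph. -/
lemma edge_filter (hι : IsFiltration m ι) {l : ℕ} {u v : List ℕ}
    (h1 : l ∉ Set.range ι) (h2 : 1 ≤ l) (h3 : l < m) (h4 : fWord l u = some v) :
    ∃ k : Fin r, (ι k.castSucc + 1 ≤ l ∧ l < ι k.succ ∧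
      fWord l (filterWord ι u k) = some (filterWord ι v k)) ∧
      ∀ k', k' ≠ k → filterWord ι u k' = filterWord ι v k' := by
  obtain ⟨k, hk1, hk2⟩ := exists_block hι h2 (le_of_lt h3)
  have hk2' : l < ι k.succ := lt_of_le_of_ne hk2 (fun h => h1 ⟨_, h.symm⟩)
  obtain ⟨hpl, hpl1⟩ := pk_self_true hι (by omega) hk2'
  refine ⟨k, ⟨by omega, hk2', ?_⟩, ?_⟩
  · rw [filterWord_eq, filterWord_eq]
    exact fWord_filter_some hpl hpl1 h4
  · intro k' hk'
    rw [filterWord_eq, filterWord_eq]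
    exact (fWord_filter_other (pk_disjoint hι hk' hk1 hk2)
      (pk_disjoint hι hk' (by omega) (by omega)) h4).symm

/-- Edges of the filtered word graph preserve the block pattern. -/
lemma edge_pattern {l : ℕ} {u v : List ℕ} (h1 : l ∉ Set.range ι)
    (h4 : fWord l u = some v) (k : Fin r) :
    v.map (pk ι k) = u.map (pk ι k) :=
  fWord_map (pk_eq_succ h1 k) h4

lemma reach_pattern {u v : List ℕ}
    (h : (FilteredWordGraph m (Set.range ι)).Reach u v) (k : Fin r) :
    u.map (pk ι k) = v.map (pk ι k) := by
  induction h with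
  | refl => rfl
  | tail _ hadj ih =>
    obtain ⟨_, _, l, hE | hE⟩ := hadj
    · rw [ih]; exact (edge_pattern hE.1 hE.2.2.2 k).symm
    · rw [ih]; exact edge_pattern hE.1 hE.2.2.2 k

/-- Lifting an adjacency of the product graph along `filterWord`. -/
lemma lift_adj (hι : IsFiltration m ι) {v : List ℕ}
    (hv : v ∈ (FilteredWordGraph m (Set.range ι)).verts) {c : Fin r → List ℕ}
    (hadj : (WordPiGraph ι).Adj (filterWord ι v) c) :
    ∃ v₂ ∈ (FilteredWordGraph m (Set.range ι)).verts,
      (FilteredWordGraph m (Set.range ι)).Adj v v₂ ∧ filterWord ι v₂ = c := by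
  obtain ⟨-, hcv, l, hE | hE⟩ := hadj
  · -- forward edge `f v → c`
    obtain ⟨k, ⟨hb1, hb2, hf⟩, hrest⟩ := hE
    obtain ⟨hpl, hpl1⟩ := pk_self_true hι hb1 hb2
    rw [filterWord_eq] at hf
    obtain ⟨p, hfw, hplt, hPp, hgD, -, -⟩ := fWord_filter_inv hpl hpl1 hf
    set v₂ := v.set p (l + 1) with hv₂
    have hnr : l ∉ Set.range ι := not_range_of_block hι (by omega) hb2
    have h1l : 1 ≤ l := by have : 0 ≤ ι k.castSucc := Nat.zero_le _; omega
    have hlm : l < m := lt_of_lt_of_le hb2 (succ_le_m hι k)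
    have hv₂mem : v₂ ∈ (FilteredWordGraph m (Set.range ι)).verts := by
      intro x hx
      rcases List.mem_or_eq_of_mem_set hx with hx' | rfl
      · exact hv x hx'
      · exact ⟨by omega, le_trans (by omega : l + 1 ≤ ι k.succ) (succ_le_m hι k)⟩
    have hfc : filterWord ι v₂ = c := by
      funext k'
      by_cases hk' : k' = k
      · subst hk'
        have h5 := fWord_filter_some (P := pk ι k') hpl hpl1 hfw
        rw [hf] at h5
        rw [filterWord_eq]
        exact (Option.some.inj h5).symm
      · rw [filterWord_eq]
        rw [fWord_filter_other (pk_disjoint hι hk' (by omega) (le_of_lt hb2))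
          (pk_disjoint hι hk' (by omega) (by omega)) hfw]
        rw [← filterWord_eq]
        exact hrest k' hk'
    exact ⟨v₂, hv₂mem, ⟨hv, hv₂mem, l, Or.inl ⟨hnr, h1l, hlm, hfw⟩⟩, hfc⟩
  · -- backward edge `c → f v`
    obtain ⟨k, ⟨hb1, hb2, hf⟩, hrest⟩ := hE
    obtain ⟨hpl, hpl1⟩ := pk_self_true hι hb1 hb2
    have hnr : l ∉ Set.range ι := not_range_of_block hι (by omega) hb2
    have h1l : 1 ≤ l := by have : 0 ≤ ι k.castSucc := Nat.zero_le _; omega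
    have hlm : l < m := lt_of_lt_of_le hb2 (succ_le_m hι k)
    rw [filterWord_eq] at hf
    obtain ⟨p', hp', hset⟩ := fWord_some_iff.1 hf
    obtain ⟨hp'lt, hp'gD⟩ := fPos_spec hp'
    have hlen : p' < (v.filter (pk ι k)).length := by
      rw [hset, List.length_set]; exact hp'lt
    obtain ⟨pos, hposlt, hPpos, hrk⟩ := rank_surj hlen
    have hval : v.getD pos 0 = l + 1 := by
      have hg := (getD_filter_rank hposlt hPpos).2
      rw [hrk] at hg
      rw [← hg, hset, getD_set_self hp'lt]
    set v₂ := v.set pos l with hv₂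
    have hfilk : v₂.filter (pk ι k) = c k := by
      rw [hv₂, filter_set_true hposlt hPpos hpl, hrk, hset, List.set_set,
        set_getD_self hp'lt hp'gD]
    have hmapeq : v₂.map (pk ι k) = v.map (pk ι k) :=
      map_set_eq (by rw [hval]; rw [hpl, hpl1])
    have hfwv₂ : fWord l v₂ = some v := by
      have hf2 : fWord l (v₂.filter (pk ι k)) = some (v.filter (pk ι k)) := by
        rw [hfilk]; exact hf
      obtain ⟨p₂, hfw₂, hp₂lt, hPp₂, hgD₂, hfp₂, -⟩ := fWord_filter_inv hpl hpl1 hf2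
      have hposlt₂ : pos < v₂.length := by rw [hv₂, List.length_set]; exact hposlt
      have hPpos₂ : pk ι k (v₂.getD pos 0) = true := by
        rw [hv₂, getD_set_self hposlt]; exact hpl
      have hrkeq : rkP (pk ι k) v₂ p₂ = rkP (pk ι k) v₂ pos := by
        have h1 : fPos l (v₂.filter (pk ι k)) = some p' := by rw [hfilk]; exact hp'
        rw [h1] at hfp₂
        have h2 : p' = rkP (pk ι k) v₂ p₂ := (Option.some.injEq _ _).mp hfp₂.symm ▸ rfl
        rw [← (Option.some.inj hfp₂)]
        rw [rank_congr hmapeq pos, hrk]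
      have hp₂pos : p₂ = pos := rank_inj hp₂lt hposlt₂ hPp₂ hPpos₂ hrkeq
      rw [hp₂pos] at hfw₂
      rw [hfw₂, hv₂, List.set_set, set_getD_self hposlt hval]
    have hv₂mem : v₂ ∈ (FilteredWordGraph m (Set.range ι)).verts := by
      intro x hx
      rcases List.mem_or_eq_of_mem_set hx with hx' | rfl
      · exact hv x hx'
      · exact ⟨h1l, le_trans (le_of_lt hb2) (succ_le_m hι k)⟩
    have hfc : filterWord ι v₂ = c := by
      funext k'
      by_cases hk' : k' = k
      · subst hk'; rw [filterWord_eq]; exact hfilk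
      · rw [filterWord_eq, hv₂,
          filter_set_false (p := pos) hposlt
            (by rw [hval]; exact pk_disjoint hι hk' (by omega) (by omega))
            (pk_disjoint hι hk' (by omega) (le_of_lt hb2))]
        rw [← filterWord_eq]
        exact (hrest k' hk').symm
    exact ⟨v₂, hv₂mem, ⟨hv, hv₂mem, l, Or.inr ⟨hnr, h1l, hlm, hfwv₂⟩⟩, hfc⟩

end Main

/-- For a filtration `I = {0 = i₀ < ⋯ < i_r = m}`, the map
`filter_I : W^I_m → W_{[1,i₁]} □ ⋯ □ W_{[i_{r-1}+1,m]}`, `w ↦ (w⁽¹⁾, …, w⁽ʳ⁾)`,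
is a local isomorphism of pre-crystal graphs. -/
theorem filter_local_isomorphism (m : ℕ) {r : ℕ} (ι : Fin (r + 1) → ℕ)
    (hι : IsFiltration m ι) :
    PCG.IsLocalIsoVia (FilteredWordGraph m (Set.range ι)) (WordPiGraph ι)
      (splitWt ι) (filterWord ι) := by
  refine ⟨⟨?_, ?_, ?_⟩, ?_, ?_, ?_⟩
  · -- vertices map to vertices
    intro w hw k x hx
    rw [filterWord_eq, List.mem_filter] at hx
    have := hx.2
    simp only [pk, decide_eq_true_eq] at this
    exact this
  · -- weights
    intro w hw
    funext k
    show (↑(w.filter (pk ι k)) : Multiset ℕ)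
      = Multiset.filter (fun x => ι k.castSucc + 1 ≤ x ∧ x ≤ ι k.succ) ↑w
    rw [Multiset.filter_coe]
    rfl
  · -- edges map to edges
    intro l u hu v hv hE
    obtain ⟨h1, h2, h3, h4⟩ := hE
    exact edge_filter hι h1 h2 h3 h4
  · -- injective on connected components
    intro u hu v hv hreach heq
    exact reconstruct hι u v hu hv (fun k => reach_pattern hreach k)
      (fun k => by rw [← filterWord_eq, ← filterWord_eq, heq])
  · -- surjective onto connected components
    intro u hu v' hv' hreach
    clear hv'
    induction hreach with
    | refl => exact ⟨u, hu, Relation.ReflTransGen.refl, rfl⟩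
    | tail hr hadj ih =>
      obtain ⟨v, hvmem, hvr, hfv⟩ := ih
      rw [← hfv] at hadj
      obtain ⟨v₂, hv₂, hadj₂, hfc⟩ := lift_adj hι hvmem hadj
      exact ⟨v₂, hv₂, hvr.tail hadj₂, hfc⟩
  · -- edges reflect on connected components
    intro l u hu v hv hreach hE
    obtain ⟨k, ⟨hb1, hb2, hf⟩, hrest⟩ := hE
    obtain ⟨hpl, hpl1⟩ := pk_self_true hι hb1 hb2
    rw [filterWord_eq] at hf
    obtain ⟨p, hfw, hplt, hPp, hgD, -, -⟩ := fWord_filter_inv hpl hpl1 hf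
    have hnr : l ∉ Set.range ι := not_range_of_block hι (by omega) hb2
    have h1l : 1 ≤ l := by have : 0 ≤ ι k.castSucc := Nat.zero_le _; omega
    have hlm : l < m := lt_of_lt_of_le hb2 (succ_le_m hι k)
    have hu₂mem : ∀ x ∈ u.set p (l + 1), 1 ≤ x ∧ x ≤ m := by
      intro x hx
      rcases List.mem_or_eq_of_mem_set hx with hx' | rfl
      · exact hu x hx'
      · exact ⟨by omega, le_trans (by omega : l + 1 ≤ ι k.succ) (succ_le_m hι k)⟩
    have hequ : u.set p (l + 1) = v := by
      apply reconstruct hι _ v hu₂mem hv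
      · intro j
        rw [edge_pattern hnr hfw j]
        exact reach_pattern hreach j
      · intro j
        by_cases hj : j = k
        · subst hj
          have h5 := fWord_filter_some (P := pk ι j) hpl hpl1 hfw
          rw [hf] at h5
          have h6 : (u.set p (l + 1)).filter (pk ι j) = filterWord ι v j :=
            (Option.some.inj h5).symm
          rw [h6, filterWord_eq]
        · calc (u.set p (l + 1)).filter (pk ι j) = u.filter (pk ι j) :=
                fWord_filter_other (pk_disjoint hι hj (by omega) (le_of_lt hb2))
                  (pk_disjoint hι hj (by omega) (by omega)) hfw
            _ = v.filter (pk ι j) := by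
                have := hrest j hj
                rw [filterWord_eq, filterWord_eq] at this
                exact this
    exact ⟨hnr, h1l, hlm, by rw [← hequ]; exact hfw⟩

end FilteredRSK
end

section
/- Fix I = {0 = i_0 < … < i_r = m}. If w and w' are Knuth equivalent words on [m], then their I-filtrations are componentwise Knuth equivalent: w^{(k)} ∼_K w'^{(k)} for every 1 ≤ k ≤ r. -/
namespace FilteredRSK

lemma blockFilter_knuthStep (lo hi : ℕ) {a b : List ℕ} (h : KnuthStep a b) :
    KnuthEquiv (blockFilter lo hi a) (blockFilter lo hi b) := by
  cases h with
  | yzx u v x y z h1 h2 =>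
    by_cases hx : lo + 1 ≤ x ∧ x ≤ hi <;>
    by_cases hy : lo + 1 ≤ y ∧ y ≤ hi <;>
    by_cases hz : lo + 1 ≤ z ∧ z ≤ hi <;>
    simp only [blockFilter, List.filter_append, List.filter_cons,
      decide_eq_true_eq, hx, hy, hz, if_pos, if_neg, not_false_iff, decide_true,
      decide_false, ite_true, ite_false]
    · exact Relation.EqvGen.rel _ _ (KnuthStep.yzx _ _ x y z h1 h2)
    all_goals first
      | exact Relation.EqvGen.refl _
      | omega
  | zxy u v x y z h1 h2 =>
    by_cases hx : lo + 1 ≤ x ∧ x ≤ hi <;>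
    by_cases hy : lo + 1 ≤ y ∧ y ≤ hi <;>
    by_cases hz : lo + 1 ≤ z ∧ z ≤ hi <;>
    simp only [blockFilter, List.filter_append, List.filter_cons,
      decide_eq_true_eq, hx, hy, hz, if_pos, if_neg, not_false_iff, decide_true,
      decide_false, ite_true, ite_false]
    · exact Relation.EqvGen.rel _ _ (KnuthStep.zxy _ _ x y z h1 h2)
    all_goals first
      | exact Relation.EqvGen.refl _
      | omega

/-- If `w` and `w'` are Knuth equivalent words on `[m]`, then their
`I`-filtrations are componentwise Knuth equivalent. -/
theorem knuth_equiv_filtration (m : ℕ) {r : ℕ} (ι : Fin (r + 1) → ℕ)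
    (hι : IsFiltration m ι) (w w' : List ℕ)
    (hw : ∀ x ∈ w, 1 ≤ x ∧ x ≤ m) (hw' : ∀ x ∈ w', 1 ≤ x ∧ x ≤ m)
    (h : KnuthEquiv w w') :
    ∀ k : Fin r, KnuthEquiv (filterWord ι w k) (filterWord ι w' k) := by
  intro k
  clear hw hw' hι
  induction h with
  | rel a b hab => exact blockFilter_knuthStep _ _ hab
  | refl a => exact Relation.EqvGen.refl _
  | symm a b _ ih => exact Relation.EqvGen.symm _ _ ih
  | trans a b c _ _ ih1 ih2 => exact Relation.EqvGen.trans _ _ _ ih1 ih2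

end FilteredRSK
end

section
/- Let w be a partial permutation with rank function r_w, and let X_w = {A ∈ Mat_{m,n}(ℂ) : for all (i,j), the rank of the northwest i×j submatrix of A is at most r_w(i,j)} be the matrix Schubert variety. Fix I = {0 = i_0 < … < i_r = m} and J = {0 = j_0 < … < j_s = n} with Desc_row(w) ⊆ I and Desc_col(w) ⊆ J. Then X_w is stable under the action (g,g')·A = g^{-1} A (g'^{-1})^T, where g ranges over invertible block-diagonal m×m complex matrices with diagonal blocks of sizes i_1−i_0, …, i_r−i_{r−1}, and g' over invertible block-diagonal n×n complex matrices with diagonal blocks of sizes j_1−j_0, …, j_s−j_{s−1}. -/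
namespace FilteredRSK

/-! ## Auxiliary lemmas for Statement 17 -/

section Aux17

open Matrix Finset

/-! ### Generic rank lemmas -/

lemma rank_sub_cols {p q q' : ℕ} (A : Matrix (Fin p) (Fin q) ℂ) (g : Fin q' → Fin q) :
    (A.submatrix id g).rank ≤ A.rank := by
  rw [Matrix.rank_eq_finrank_span_cols, Matrix.rank_eq_finrank_span_cols]
  apply Submodule.finrank_mono
  apply Submodule.span_mono
  rintro _ ⟨c, rfl⟩
  exact ⟨g c, rfl⟩

lemma rank_sub_rows {p q p' : ℕ} (A : Matrix (Fin p) (Fin q) ℂ) (f : Fin p' → Fin p) :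
    (A.submatrix f id).rank ≤ A.rank := by
  rw [Matrix.rank_eq_finrank_span_cols, Matrix.rank_eq_finrank_span_cols]
  have himg : Set.range (A.submatrix f id)ᵀ = (LinearMap.funLeft ℂ ℂ f) '' Set.range Aᵀ := by
    ext v
    constructor
    · rintro ⟨c, rfl⟩
      exact ⟨Aᵀ c, ⟨c, rfl⟩, rfl⟩
    · rintro ⟨-, ⟨c, rfl⟩, rfl⟩
      exact ⟨c, rfl⟩
  rw [show Set.range (A.submatrix f id).col = Set.range (A.submatrix f id)ᵀ from rfl,
    show Set.range A.col = Set.range Aᵀ from rfl, himg, Submodule.span_image]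
  exact Submodule.finrank_map_le _ _

lemma rank_submatrix_le' {p q p' q' : ℕ} (A : Matrix (Fin p) (Fin q) ℂ)
    (f : Fin p' → Fin p) (g : Fin q' → Fin q) :
    (A.submatrix f g).rank ≤ A.rank := by
  have h : A.submatrix f g = (A.submatrix f id).submatrix id g := rfl
  rw [h]
  exact (rank_sub_cols _ g).trans (rank_sub_rows A f)

lemma rank_succ_col {p q : ℕ} (M : Matrix (Fin p) (Fin (q + 1)) ℂ) :
    M.rank ≤ (M.submatrix id Fin.castSucc).rank + 1 := by
  rw [Matrix.rank_eq_finrank_span_cols, Matrix.rank_eq_finrank_span_cols]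
  rw [show Set.range M.col = Set.range Mᵀ from rfl, show Set.range (M.submatrix id Fin.castSucc).col
    = Set.range (M.submatrix id Fin.castSucc)ᵀ from rfl]
  have hsub : Submodule.span ℂ (Set.range Mᵀ) ≤
      Submodule.span ℂ (Set.range (M.submatrix id Fin.castSucc)ᵀ) ⊔
        Submodule.span ℂ {Mᵀ (Fin.last q)} := by
    rw [← Submodule.span_union]
    apply Submodule.span_mono
    rintro _ ⟨c, rfl⟩
    induction c using Fin.lastCases with
    | last => exact Or.inr rfl
    | cast c' => exact Or.inl ⟨c', rfl⟩
  refine (Submodule.finrank_mono hsub).trans ?_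
  refine (Submodule.finrank_add_le_finrank_add_finrank _ _).trans ?_
  have h1 : Module.finrank ℂ (Submodule.span ℂ {Mᵀ (Fin.last q)}) ≤ 1 := by
    refine (finrank_span_le_card _).trans ?_
    simp
  omega

lemma rank_succ_row {p q : ℕ} (M : Matrix (Fin (p + 1)) (Fin q) ℂ) :
    M.rank ≤ (M.submatrix Fin.castSucc id).rank + 1 := by
  rw [← Matrix.rank_transpose M, ← Matrix.rank_transpose (M.submatrix Fin.castSucc id)]
  have h : (M.submatrix Fin.castSucc id)ᵀ = Mᵀ.submatrix id Fin.castSucc := rfl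
  rw [h]
  exact rank_succ_col Mᵀ

lemma nw_mono {m n : ℕ} (B : Matrix (Fin m) (Fin n) ℂ) {i i' j j' : ℕ}
    (hi : i ≤ m) (hj : j ≤ n) (hi' : i' ≤ m) (hj' : j' ≤ n) (h1 : i ≤ i') (h2 : j ≤ j') :
    (B.submatrix (Fin.castLE hi) (Fin.castLE hj)).rank ≤
      (B.submatrix (Fin.castLE hi') (Fin.castLE hj')).rank := by
  have h : B.submatrix (Fin.castLE hi) (Fin.castLE hj) =
      (B.submatrix (Fin.castLE hi') (Fin.castLE hj')).submatrix
        (Fin.castLE h1) (Fin.castLE h2) := rfl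
  rw [h]
  exact rank_submatrix_le' _ _ _

lemma nw_row_succ {m n : ℕ} (B : Matrix (Fin m) (Fin n) ℂ) {i j : ℕ}
    (hi1 : i + 1 ≤ m) (hi : i ≤ m) (hj : j ≤ n) :
    (B.submatrix (Fin.castLE hi1) (Fin.castLE hj)).rank ≤
      (B.submatrix (Fin.castLE hi) (Fin.castLE hj)).rank + 1 := by
  have h : B.submatrix (Fin.castLE hi) (Fin.castLE hj) =
      (B.submatrix (Fin.castLE hi1) (Fin.castLE hj)).submatrix Fin.castSucc id := rfl
  rw [h]
  exact rank_succ_row _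

lemma nw_col_succ {m n : ℕ} (B : Matrix (Fin m) (Fin n) ℂ) {i j : ℕ}
    (hi : i ≤ m) (hj1 : j + 1 ≤ n) (hj : j ≤ n) :
    (B.submatrix (Fin.castLE hi) (Fin.castLE hj1)).rank ≤
      (B.submatrix (Fin.castLE hi) (Fin.castLE hj)).rank + 1 := by
  have h : B.submatrix (Fin.castLE hi) (Fin.castLE hj) =
      (B.submatrix (Fin.castLE hi) (Fin.castLE hj1)).submatrix id Fin.castSucc := rfl
  rw [h]
  exact rank_succ_col _

/-! ### Truncated sums and the corner factorization -/

lemma sum_trunc {M c : ℕ} (hc : c ≤ M) (f : Fin M → ℂ)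
    (hf : ∀ b : Fin M, c ≤ (b : ℕ) → f b = 0) :
    ∑ b, f b = ∑ b : Fin c, f (Fin.castLE hc b) := by
  set F : ℕ → ℂ := fun x => if h : x < M then f ⟨x, h⟩ else 0 with hF
  have h1 : ∑ b, f b = ∑ x ∈ Finset.range M, F x := by
    rw [← Fin.sum_univ_eq_sum_range]
    refine Finset.sum_congr rfl fun b _ => ?_
    simp [hF, b.isLt]
  have h2 : ∑ b : Fin c, f (Fin.castLE hc b) = ∑ x ∈ Finset.range c, F x := by
    rw [← Fin.sum_univ_eq_sum_range]
    refine Finset.sum_congr rfl fun b _ => ?_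
    have hb : (b : ℕ) < M := lt_of_lt_of_le b.isLt hc
    simp only [hF, dif_pos hb]
    rfl
  rw [h1, h2]
  refine (Finset.sum_subset (Finset.range_subset_range.mpr hc) fun x hxM hxc => ?_).symm
  rw [Finset.mem_range] at hxM hxc
  simp only [hF, dif_pos hxM]
  exact hf ⟨x, hxM⟩ (not_lt.mp hxc)

lemma corner_rank_le {m n c d : ℕ} (hc : c ≤ m) (hd : d ≤ n)
    (G : Matrix (Fin m) (Fin m) ℂ) (A : Matrix (Fin m) (Fin n) ℂ)
    (H : Matrix (Fin n) (Fin n) ℂ)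
    (hG : ∀ a b : Fin m, (a : ℕ) < c → c ≤ (b : ℕ) → G a b = 0)
    (hH : ∀ a b : Fin n, (a : ℕ) < d → d ≤ (b : ℕ) → H a b = 0) :
    ((G * A * Hᵀ).submatrix (Fin.castLE hc) (Fin.castLE hd)).rank ≤
      (A.submatrix (Fin.castLE hc) (Fin.castLE hd)).rank := by
  have e1 : (G * A * Hᵀ).submatrix (Fin.castLE hc) (Fin.castLE hd) =
      (G.submatrix (Fin.castLE hc) (Fin.castLE hc)) *
        (A.submatrix (Fin.castLE hc) (Fin.castLE hd)) *
        ((Hᵀ).submatrix (Fin.castLE hd) (Fin.castLE hd)) := by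
    ext a b
    simp only [Matrix.submatrix_apply, Matrix.mul_apply, Matrix.transpose_apply]
    rw [sum_trunc hd
      (fun y => (∑ x, G (Fin.castLE hc a) x * A x y) * H (Fin.castLE hd b) y)
      (fun y hy => by beta_reduce; rw [hH _ _ b.isLt hy, mul_zero])]
    refine Finset.sum_congr rfl fun y' _ => ?_
    congr 1
    exact sum_trunc hc (fun x => G (Fin.castLE hc a) x * A x (Fin.castLE hd y'))
      (fun x hx => by beta_reduce; rw [hG _ _ a.isLt hx, zero_mul])
  rw [e1, Matrix.mul_assoc]
  exact (Matrix.rank_mul_le_right _ _).trans (Matrix.rank_mul_le_left _ _)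

/-! ### Block-diagonal matrices -/

/-- Index of the block containing `a`, as a count of cut points `≤ a`. -/
def bIdx {r : ℕ} (ι : Fin (r + 1) → ℕ) (a : ℕ) : ℕ :=
  (Finset.univ.filter fun k : Fin (r + 1) => ι k ≤ a).card

lemma bIdx_lt {r : ℕ} {ι : Fin (r + 1) → ℕ} {a b : ℕ} (k : Fin (r + 1))
    (ha : a < ι k) (hb : ι k ≤ b) : bIdx ι a < bIdx ι b := by
  apply Finset.card_lt_card
  constructor
  · intro k' hk'
    rw [Finset.mem_filter] at hk' ⊢
    exact ⟨hk'.1, le_trans (le_of_lt (lt_of_le_of_lt hk'.2 ha)) hb⟩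
  · intro hsub
    have hk : k ∈ Finset.univ.filter fun k' : Fin (r + 1) => ι k' ≤ b := by
      rw [Finset.mem_filter]; exact ⟨Finset.mem_univ _, hb⟩
    have := hsub hk
    rw [Finset.mem_filter] at this
    omega

lemma blockdiag_zero {m r : ℕ} {ι : Fin (r + 1) → ℕ} (hmono : StrictMono ι)
    {g : Matrix (Fin m) (Fin m) ℂ} (hgb : IsBlockDiag ι g) {a b : Fin m}
    (hne : bIdx ι (a : ℕ) ≠ bIdx ι (b : ℕ)) : g a b = 0 := by
  apply hgb
  rintro ⟨k, h1, h2, h3, h4⟩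
  apply hne
  unfold bIdx
  congr 1
  apply Finset.filter_congr
  intro k' _
  have hcase : k' ≤ k.castSucc ∨ k.succ ≤ k' := by
    rcases le_or_gt k' k.castSucc with h | h
    · exact Or.inl h
    · exact Or.inr (by rwa [Fin.castSucc_lt_iff_succ_le] at h)
  rcases hcase with h | h
  · have ha' : ι k' ≤ ι k.castSucc := hmono.monotone h
    simp only [le_trans ha' h1, le_trans ha' h3]
  · have ha' : ι k.succ ≤ ι k' := hmono.monotone h
    constructor <;> intro hle <;> omega

lemma inv_corner_zero {m r : ℕ} {ι : Fin (r + 1) → ℕ} (hmono : StrictMono ι)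
    {g : Matrix (Fin m) (Fin m) ℂ} (hg : IsUnit g) (hgb : IsBlockDiag ι g)
    (k : Fin (r + 1)) :
    ∀ a b : Fin m, (a : ℕ) < ι k → ι k ≤ (b : ℕ) → g⁻¹ a b = 0 := by
  haveI := hg.invertible
  have hbt : Matrix.BlockTriangular g
      (fun a : Fin m => OrderDual.toDual (bIdx ι (a : ℕ))) := by
    intro x y hxy
    exact blockdiag_zero hmono hgb (ne_of_lt (OrderDual.toDual_lt_toDual.mp hxy))
  have hbt' := Matrix.blockTriangular_inv_of_blockTriangular hbt
  intro a b ha hb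
  exact hbt' (show OrderDual.toDual (bIdx ι (b : ℕ)) <
    OrderDual.toDual (bIdx ι (a : ℕ)) from bIdx_lt k ha hb)

/-! ### Rank function combinatorics -/


lemma rankFn_mono {m n : ℕ} (w : Fin m → Option (Fin n)) {i i' j j' : ℕ}
    (h1 : i ≤ i') (h2 : j ≤ j') : rankFn w i j ≤ rankFn w i' j' := by
  unfold rankFn
  apply Set.ncard_le_ncard _ (Set.toFinite _)
  rintro a ⟨ha, b, hb, hbj⟩
  exact ⟨lt_of_lt_of_le ha h1, b, hb, lt_of_lt_of_le hbj h2⟩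

lemma rankFn_col_succ {m n : ℕ} (w : Fin m → Option (Fin n)) (hw : IsPartialPerm w)
    (i j : ℕ) : rankFn w i (j + 1) ≤ rankFn w i j + 1 := by
  unfold rankFn
  by_cases hex : ∃ a₀ : Fin m, ∃ hb : j < n, w a₀ = some ⟨j, hb⟩
  · obtain ⟨a₀, hbn, ha₀⟩ := hex
    refine le_trans (Set.ncard_le_ncard ?_ (Set.toFinite _)) (Set.ncard_insert_le a₀ _)
    rintro a ⟨ha, b, hb, hbj⟩
    rcases Nat.lt_succ_iff_lt_or_eq.mp hbj with h | h
    · exact Or.inr ⟨ha, b, hb, h⟩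
    · have hbeq : b = ⟨j, hbn⟩ := Fin.ext h
      exact Or.inl (hw a a₀ ⟨j, hbn⟩ (hbeq ▸ hb) ha₀)
  · refine le_trans (Set.ncard_le_ncard ?_ (Set.toFinite _)) (Nat.le_succ _)
    rintro a ⟨ha, b, hb, hbj⟩
    rcases Nat.lt_succ_iff_lt_or_eq.mp hbj with h | h
    · exact ⟨ha, b, hb, h⟩
    · exact absurd ⟨a, h ▸ b.isLt, by rw [hb]; congr 1; exact Fin.ext h⟩ hex

lemma rankFn_row_succ {m n : ℕ} (w : Fin m → Option (Fin n)) (i j : ℕ) :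
    rankFn w (i + 1) j ≤ rankFn w i j + 1 := by
  unfold rankFn
  by_cases him : i < m
  · refine le_trans (Set.ncard_le_ncard ?_ (Set.toFinite _))
      (Set.ncard_insert_le (⟨i, him⟩ : Fin m) _)
    rintro a ⟨ha, hb⟩
    rcases Nat.lt_succ_iff_lt_or_eq.mp ha with h | h
    · exact Or.inr ⟨h, hb⟩
    · exact Or.inl (Fin.ext h)
  · refine le_trans (Set.ncard_le_ncard ?_ (Set.toFinite _)) (Nat.le_succ _)
    rintro a ⟨_, hb⟩
    exact ⟨lt_of_lt_of_le a.isLt (not_lt.mp him), hb⟩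

lemma rankFn_new_elt {m n : ℕ} {w : Fin m → Option (Fin n)} {i i' j j' : ℕ}
    (hlt : rankFn w i j < rankFn w i' j') :
    ∃ a : Fin m, ((a : ℕ) < i' ∧ ∃ b : Fin n, w a = some b ∧ (b : ℕ) < j') ∧
      ¬((a : ℕ) < i ∧ ∃ b : Fin n, w a = some b ∧ (b : ℕ) < j) := by
  by_contra hcon
  push_neg at hcon
  unfold rankFn at hlt
  refine absurd (Set.ncard_le_ncard ?_ (Set.toFinite _)) (not_le.mpr hlt)
  rintro a ⟨ha, b, hb, hbj⟩
  exact hcon a ⟨ha, b, hb, hbj⟩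

lemma rankFn_strict {m n : ℕ} {w : Fin m → Option (Fin n)} {i i' j j' : ℕ}
    (hii : i ≤ i') (hjj : j ≤ j') (a : Fin m) (b : Fin n)
    (ha' : (a : ℕ) < i') (hb : w a = some b) (hb' : (b : ℕ) < j')
    (hnot : ¬((a : ℕ) < i ∧ (b : ℕ) < j)) : rankFn w i j < rankFn w i' j' := by
  unfold rankFn
  apply Set.ncard_lt_ncard _ (Set.toFinite _)
  constructor
  · rintro x ⟨hx, c, hc, hcj⟩
    exact ⟨lt_of_lt_of_le hx hii, c, hc, lt_of_lt_of_le hcj hjj⟩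
  · intro hsub
    obtain ⟨hx, c, hc, hcj⟩ := hsub ⟨ha', b, hb, hb'⟩
    have hcb : c = b := by rw [hb] at hc; exact (Option.some.inj hc).symm
    exact hnot ⟨hx, hcb ▸ hcj⟩

lemma descRow_extract {m n : ℕ} {w : Fin m → Option (Fin n)} (hw : IsPartialPerm w)
    {i₀ j : ℕ} (him : i₀ + 1 < m)
    (h1 : rankFn w (i₀ + 1) j < rankFn w (i₀ + 2) j)
    (h2 : rankFn w (i₀ + 1) j ≤ rankFn w i₀ j) :
    (i₀ + 1) ∈ DescRow w := by
  obtain ⟨a, ⟨ha1, b₀, hwb, hbj⟩, hnot⟩ := rankFn_new_elt h1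
  have hai : (a : ℕ) = i₀ + 1 := by
    have hx : ¬ (a : ℕ) < i₀ + 1 := fun hlt => hnot ⟨hlt, b₀, hwb, hbj⟩
    omega
  have hrow : ∀ b : Fin n, w ⟨i₀, by omega⟩ = some b → ¬ ((b : ℕ) < j) := by
    intro b hb hbj'
    refine absurd (rankFn_strict (i' := i₀ + 1) (j' := j) (Nat.le_succ i₀) (le_refl j)
      (⟨i₀, by omega⟩ : Fin m) b (Nat.lt_succ_self i₀) hb hbj' ?_) (not_lt.mpr h2)
    rintro ⟨hx, -⟩
    exact absurd hx (lt_irrefl i₀)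
  have haeq : a = ⟨i₀ + 1, him⟩ := Fin.ext hai
  refine ⟨Nat.le_add_left 1 i₀, him, b₀, ⟨?_, ?_⟩, ?_⟩
  · intro b hb
    have hx := hrow b hb
    show ((b₀ : Fin n) : ℕ) < (b : ℕ)
    omega
  · intro a' ha' hwa'
    have heq : a' = a := hw a' a b₀ hwa' hwb
    have hle : (a' : ℕ) ≤ i₀ := ha'
    have hv : (a' : ℕ) = i₀ + 1 := by rw [heq, hai]
    omega
  · intro j' hj'
    exact hj'.1 b₀ (haeq ▸ hwb)

lemma descCol_extract {m n : ℕ} {w : Fin m → Option (Fin n)}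
    {i j₀ : ℕ} (hjn : j₀ + 1 < n)
    (h1 : rankFn w i (j₀ + 1) < rankFn w i (j₀ + 2))
    (h2 : rankFn w i (j₀ + 1) ≤ rankFn w i j₀) :
    (j₀ + 1) ∈ DescCol w := by
  obtain ⟨a₀, ⟨ha1, b, hwb, hbj⟩, hnot⟩ := rankFn_new_elt h1
  have hbv : (b : ℕ) = j₀ + 1 := by
    have hx : ¬ (b : ℕ) < j₀ + 1 := fun hlt => hnot ⟨ha1, b, hwb, hlt⟩
    omega
  have hbeq : b = ⟨j₀ + 1, hjn⟩ := Fin.ext hbv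
  have hcol : ∀ a : Fin m, (a : ℕ) < i → w a ≠ some ⟨j₀, by omega⟩ := by
    intro a ha hwa
    refine absurd (rankFn_strict (i' := i) (j' := j₀ + 1) (le_refl i) (Nat.le_succ j₀)
      a (⟨j₀, by omega⟩ : Fin n) ha hwa (Nat.lt_succ_self j₀) ?_) (not_lt.mpr h2)
    rintro ⟨-, hx⟩
    exact absurd hx (lt_irrefl j₀)
  refine ⟨Nat.le_add_left 1 j₀, hjn, a₀, ⟨?_, ?_⟩, ?_⟩
  · intro b' hb'
    have heq : b' = b := by rw [hwb] at hb'; exact (Option.some.inj hb').symm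
    rw [heq]
    show j₀ < (b : ℕ)
    omega
  · intro a ha hwa
    exact hcol a (lt_of_le_of_lt (show (a : ℕ) ≤ (a₀ : ℕ) from ha) ha1) hwa
  · intro i' hi'
    by_contra hcon
    push_neg at hcon
    exact hi'.2 a₀ hcon (hbeq ▸ hwb)

end Aux17


open Matrix in
/-- If `Desc_row(w) ⊆ I` and `Desc_col(w) ⊆ J`, then the matrix Schubert
variety `X_w` is stable under the action `(g,g') · A = g⁻¹ A (g'⁻¹)ᵀ` of the Levi group of
invertible block-diagonal matrices with blocks of sizes `i₁-i₀, …, i_r-i_{r-1}` and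
`j₁-j₀, …, j_s-j_{s-1}`. -/
theorem matrix_schubert_levi_stable (m n : ℕ) {r s : ℕ}
    (ι : Fin (r + 1) → ℕ) (κ : Fin (s + 1) → ℕ)
    (hι : IsFiltration m ι) (hκ : IsFiltration n κ)
    (w : Fin m → Option (Fin n)) (hw : IsPartialPerm w)
    (hdr : DescRow w ⊆ Set.range ι) (hdc : DescCol w ⊆ Set.range κ)
    (g : Matrix (Fin m) (Fin m) ℂ) (g' : Matrix (Fin n) (Fin n) ℂ)
    (hg : IsUnit g) (hg' : IsUnit g')
    (hgb : IsBlockDiag ι g) (hg'b : IsBlockDiag κ g')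
    (A : Matrix (Fin m) (Fin n) ℂ) (hA : A ∈ XSchubert w) :
    g⁻¹ * A * (g'⁻¹)ᵀ ∈ XSchubert w := by
  have hA' : ∀ (i : ℕ) (hi : i ≤ m) (j : ℕ) (hj : j ≤ n),
      (A.submatrix (Fin.castLE hi) (Fin.castLE hj)).rank ≤ rankFn w i j := hA
  have hGz : ∀ k : Fin (r + 1), ∀ a b : Fin m,
      (a : ℕ) < ι k → ι k ≤ (b : ℕ) → g⁻¹ a b = 0 :=
    fun k => inv_corner_zero hι.1 hg hgb k
  have hHz : ∀ l : Fin (s + 1), ∀ a b : Fin n,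
      (a : ℕ) < κ l → κ l ≤ (b : ℕ) → g'⁻¹ a b = 0 :=
    fun l => inv_corner_zero hκ.1 hg' hg'b l
  have key : ∀ N : ℕ, ∀ i j : ℕ, ∀ (hi : i ≤ m) (hj : j ≤ n),
      rankFn w i j * (m + n + 1) + (m - i) + (n - j) ≤ N →
      (((g⁻¹ * A * (g'⁻¹)ᵀ).submatrix (Fin.castLE hi) (Fin.castLE hj)).rank : ℕ) ≤
        rankFn w i j := by
    intro N
    induction N using Nat.strong_induction_on with
    | _ N IH =>
    intro i j hi hj hmeas
    by_cases hri : i ∈ Set.range ι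
    · by_cases hrj : j ∈ Set.range κ
      · obtain ⟨k, rfl⟩ := hri
        obtain ⟨l, rfl⟩ := hrj
        exact (corner_rank_le hi hj g⁻¹ A g'⁻¹ (hGz k) (hHz l)).trans (hA' _ hi _ hj)
      · have hj1 : 1 ≤ j := by
          rcases Nat.eq_zero_or_pos j with h0 | h0
          · exact absurd ⟨0, by rw [hκ.2.1, h0]⟩ hrj
          · exact h0
        have hjn : j < n := by
          rcases lt_or_eq_of_le hj with h0 | h0
          · exact h0
          · exact absurd ⟨Fin.last s, by rw [hκ.2.2, h0]⟩ hrj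
        obtain ⟨j₀, rfl⟩ : ∃ j₀, j = j₀ + 1 := ⟨j - 1, by omega⟩
        rcases le_or_gt (rankFn w i (j₀ + 2)) (rankFn w i (j₀ + 1)) with hcase | hcase
        · have hr : rankFn w i (j₀ + 2) = rankFn w i (j₀ + 1) :=
            le_antisymm hcase (rankFn_mono w le_rfl (Nat.le_succ _))
          have hrec := IH (rankFn w i (j₀ + 2) * (m + n + 1) + (m - i) + (n - (j₀ + 2)))
            (by rw [hr]; omega) i (j₀ + 2) hi (by omega) le_rfl
          calc ((g⁻¹ * A * (g'⁻¹)ᵀ).submatrix (Fin.castLE hi) (Fin.castLE hj)).rank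
              ≤ ((g⁻¹ * A * (g'⁻¹)ᵀ).submatrix (Fin.castLE hi)
                  (Fin.castLE (show j₀ + 2 ≤ n by omega))).rank :=
                nw_mono _ hi hj hi (by omega) le_rfl (Nat.le_succ _)
            _ ≤ rankFn w i (j₀ + 2) := hrec
            _ ≤ rankFn w i (j₀ + 1) := le_of_eq hr
        · rcases le_or_gt (rankFn w i j₀ + 1) (rankFn w i (j₀ + 1)) with hcase2 | hcase2
          · have hprod : rankFn w i j₀ * (m + n + 1) + (m + n + 1) ≤
                rankFn w i (j₀ + 1) * (m + n + 1) := by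
              calc rankFn w i j₀ * (m + n + 1) + (m + n + 1)
                  = (rankFn w i j₀ + 1) * (m + n + 1) := by ring
                _ ≤ rankFn w i (j₀ + 1) * (m + n + 1) := Nat.mul_le_mul_right _ hcase2
            have hrec := IH (rankFn w i j₀ * (m + n + 1) + (m - i) + (n - j₀))
              (by omega) i j₀ hi (by omega) le_rfl
            calc ((g⁻¹ * A * (g'⁻¹)ᵀ).submatrix (Fin.castLE hi) (Fin.castLE hj)).rank
                ≤ ((g⁻¹ * A * (g'⁻¹)ᵀ).submatrix (Fin.castLE hi)
                    (Fin.castLE (show j₀ ≤ n by omega))).rank + 1 :=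
                  nw_col_succ _ hi hj (by omega)
              _ ≤ rankFn w i j₀ + 1 := by omega
              _ ≤ rankFn w i (j₀ + 1) := hcase2
          · exact absurd (hdc (descCol_extract hjn hcase (by omega))) hrj
    · have hi1 : 1 ≤ i := by
        rcases Nat.eq_zero_or_pos i with h0 | h0
        · exact absurd ⟨0, by rw [hι.2.1, h0]⟩ hri
        · exact h0
      have him : i < m := by
        rcases lt_or_eq_of_le hi with h0 | h0
        · exact h0
        · exact absurd ⟨Fin.last r, by rw [hι.2.2, h0]⟩ hri
      obtain ⟨i₀, rfl⟩ : ∃ i₀, i = i₀ + 1 := ⟨i - 1, by omega⟩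
      rcases le_or_gt (rankFn w (i₀ + 2) j) (rankFn w (i₀ + 1) j) with hcase | hcase
      · have hr : rankFn w (i₀ + 2) j = rankFn w (i₀ + 1) j :=
          le_antisymm hcase (rankFn_mono w (Nat.le_succ _) le_rfl)
        have hrec := IH (rankFn w (i₀ + 2) j * (m + n + 1) + (m - (i₀ + 2)) + (n - j))
          (by rw [hr]; omega) (i₀ + 2) j (by omega) hj le_rfl
        calc ((g⁻¹ * A * (g'⁻¹)ᵀ).submatrix (Fin.castLE hi) (Fin.castLE hj)).rank
            ≤ ((g⁻¹ * A * (g'⁻¹)ᵀ).submatrix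
                (Fin.castLE (show i₀ + 2 ≤ m by omega)) (Fin.castLE hj)).rank :=
              nw_mono _ hi hj (by omega) hj (Nat.le_succ _) le_rfl
          _ ≤ rankFn w (i₀ + 2) j := hrec
          _ ≤ rankFn w (i₀ + 1) j := le_of_eq hr
      · rcases le_or_gt (rankFn w i₀ j + 1) (rankFn w (i₀ + 1) j) with hcase2 | hcase2
        · have hprod : rankFn w i₀ j * (m + n + 1) + (m + n + 1) ≤
              rankFn w (i₀ + 1) j * (m + n + 1) := by
            calc rankFn w i₀ j * (m + n + 1) + (m + n + 1)
                = (rankFn w i₀ j + 1) * (m + n + 1) := by ring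
              _ ≤ rankFn w (i₀ + 1) j * (m + n + 1) := Nat.mul_le_mul_right _ hcase2
          have hrec := IH (rankFn w i₀ j * (m + n + 1) + (m - i₀) + (n - j))
            (by omega) i₀ j (by omega) hj le_rfl
          calc ((g⁻¹ * A * (g'⁻¹)ᵀ).submatrix (Fin.castLE hi) (Fin.castLE hj)).rank
              ≤ ((g⁻¹ * A * (g'⁻¹)ᵀ).submatrix
                  (Fin.castLE (show i₀ ≤ m by omega)) (Fin.castLE hj)).rank + 1 :=
                nw_row_succ _ hi (by omega) hj
            _ ≤ rankFn w i₀ j + 1 := by omega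
            _ ≤ rankFn w (i₀ + 1) j := hcase2
        · exact absurd (hdr (descRow_extract hw him hcase (by omega))) hri
  show ∀ (i : ℕ) (hi : i ≤ m) (j : ℕ) (hj : j ≤ n),
      (((g⁻¹ * A * (g'⁻¹)ᵀ).submatrix (Fin.castLE hi) (Fin.castLE hj)).rank : ℕ) ≤
        rankFn w i j
  intro i hi j hj
  exact key (rankFn w i j * (m + n + 1) + (m - i) + (n - j)) i j hi hj le_rfl


end FilteredRSK
end
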